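/- arXiv:1912.03443 — 11 statements merged into one kernel-verified Lean document; each statement's English description precedes it below -/
import Mathlib

section
/- In the UBS sampling model, the count estimator is unbiased for the join size: E[Ĵ_count] = γ_{1,1} = Σ_{v∈ι} (a v)·(b v). -/
open MeasureTheory ProbabilityTheory

lemma integral_of_01 {Ω : Type*} [MeasurableSpace Ω] (μ : Measure Ω) [IsProbabilityMeasure μ]
    (X : Ω → ℝ) (hXm : Measurable X) (hX01 : ∀ ω, X ω = 0 ∨ X ω = 1) :
    ∫ ω, X ω ∂μ = (μ {ω | X ω = 1}).toReal := by
  have hset : MeasurableSet {ω | X ω = 1} := hXm (measurableSet_singleton 1)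
  have hX : X = Set.indicator {ω | X ω = 1} (fun _ => (1:ℝ)) := by
    funext ω
    rcases hX01 ω with h | h <;> simp [Set.indicator_apply, h, Set.mem_setOf_eq]
  rw [hX, integral_indicator_const _ hset]
  simp
  rfl

lemma integrable_of_01 {Ω : Type*} [MeasurableSpace Ω] (μ : Measure Ω) [IsProbabilityMeasure μ]
    (X : Ω → ℝ) (hXm : Measurable X) (hX01 : ∀ ω, X ω = 0 ∨ X ω = 1) :
    Integrable X μ := by
  have hset : MeasurableSet {ω | X ω = 1} := hXm (measurableSet_singleton 1)
  have hX : X = Set.indicator {ω | X ω = 1} (fun _ => (1:ℝ)) := by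
    funext ω
    rcases hX01 ω with h | h <;> simp [Set.indicator_apply, h, Set.mem_setOf_eq]
  rw [hX]
  exact (integrable_const (1:ℝ)).indicator hset

/-- **Unbiasedness of the UBS count estimator.**
Join-frequency model: `ι` indexes join-key values, `a b : ι → ℕ` are the key frequencies in the
two tables.  UBS sampling model: `U v` is Bernoulli(`p`) (the universe sampler), `ξ v i` are
Bernoulli(`q₁`) and `η v j` are Bernoulli(`q₂`) (the uniform samplers for the tuples of each
table), and the whole family is mutually independent.  The sampled-join count is
`Z ω = ∑ v, U v ω * (∑ i, ξ v i ω) * (∑ j, η v j ω)` and the count estimator is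
`Ĵ_count = Z / (p q₁ q₂)`.  Then `E[Ĵ_count] = γ_{1,1} = ∑ v, a v * b v`. -/
theorem count_estimator_unbiased
    {Ω : Type*} [MeasurableSpace Ω] (μ : Measure Ω) [IsProbabilityMeasure μ]
    {ι : Type*} [Fintype ι]
    (a b : ι → ℕ) (p q₁ q₂ : ℝ)
    (hp : 0 < p) (hp1 : p ≤ 1) (hq₁ : 0 < q₁) (hq₁1 : q₁ ≤ 1) (hq₂ : 0 < q₂) (hq₂1 : q₂ ≤ 1)
    (U : ι → Ω → ℝ) (ξ : (v : ι) → Fin (a v) → Ω → ℝ) (η : (v : ι) → Fin (b v) → Ω → ℝ)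
    (hUm : ∀ v, Measurable (U v))
    (hξm : ∀ v i, Measurable (ξ v i))
    (hηm : ∀ v j, Measurable (η v j))
    (hU01 : ∀ v ω, U v ω = 0 ∨ U v ω = 1)
    (hξ01 : ∀ v i ω, ξ v i ω = 0 ∨ ξ v i ω = 1)
    (hη01 : ∀ v j ω, η v j ω = 0 ∨ η v j ω = 1)
    (hUp : ∀ v, μ {ω | U v ω = 1} = ENNReal.ofReal p)
    (hξq : ∀ v i, μ {ω | ξ v i ω = 1} = ENNReal.ofReal q₁)
    (hηq : ∀ v j, μ {ω | η v j ω = 1} = ENNReal.ofReal q₂)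
    (hIndep : iIndepFun (m := fun _ => (inferInstance : MeasurableSpace ℝ))
      (Sum.elim (fun v : ι => U v)
        (Sum.elim (fun vi : Σ v : ι, Fin (a v) => ξ vi.1 vi.2)
                  (fun vj : Σ v : ι, Fin (b v) => η vj.1 vj.2))) μ) :
    ∫ ω, (1 / (p * q₁ * q₂)) * ∑ v, U v ω * (∑ i, ξ v i ω) * (∑ j, η v j ω) ∂μ
      = ∑ v, (a v : ℝ) * (b v : ℝ) := by
  classical
  set F := (Sum.elim (fun v : ι => U v)
        (Sum.elim (fun vi : Σ v : ι, Fin (a v) => ξ vi.1 vi.2)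
                  (fun vj : Σ v : ι, Fin (b v) => η vj.1 vj.2))) with hF
  -- single-term expectation
  have key : ∀ (v : ι) (i : Fin (a v)) (j : Fin (b v)),
      ∫ ω, U v ω * ξ v i ω * η v j ω ∂μ = p * q₁ * q₂ := by
    intro v i j
    have h01 : ∀ ω, U v ω * ξ v i ω * η v j ω = 0 ∨ U v ω * ξ v i ω * η v j ω = 1 := by
      intro ω
      rcases hU01 v ω with h1 | h1 <;> rcases hξ01 v i ω with h2 | h2 <;>
        rcases hη01 v j ω with h3 | h3 <;> simp [h1, h2, h3]
    have hm : Measurable (fun ω => U v ω * ξ v i ω * η v j ω) :=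
      ((hUm v).mul (hξm v i)).mul (hηm v j)
    rw [integral_of_01 μ _ hm h01]
    have hsets : {ω | U v ω * ξ v i ω * η v j ω = 1}
        = ({ω | U v ω = 1} ∩ {ω | ξ v i ω = 1}) ∩ {ω | η v j ω = 1} := by
      ext ω
      rcases hU01 v ω with h1 | h1 <;> rcases hξ01 v i ω with h2 | h2 <;>
        rcases hη01 v j ω with h3 | h3 <;> simp [h1, h2, h3]
    have hd12 : (Sum.inl v : ι ⊕ ((Σ v : ι, Fin (a v)) ⊕ (Σ v : ι, Fin (b v))))
        ≠ Sum.inr (Sum.inl ⟨v, i⟩) := by simp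
    -- measure of intersection via independence
    set k₁ : ι ⊕ ((Σ v : ι, Fin (a v)) ⊕ (Σ v : ι, Fin (b v))) := Sum.inl v
    set k₂ : ι ⊕ ((Σ v : ι, Fin (a v)) ⊕ (Σ v : ι, Fin (b v))) := Sum.inr (Sum.inl ⟨v, i⟩)
    set k₃ : ι ⊕ ((Σ v : ι, Fin (a v)) ⊕ (Σ v : ι, Fin (b v))) := Sum.inr (Sum.inr ⟨v, j⟩)
    have hmeas := hIndep.measure_inter_preimage_eq_mul (S := {k₁, k₂, k₃})
      (sets := fun _ => {1}) (fun k _ => measurableSet_singleton 1)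
    have h12 : k₁ ≠ k₂ := by simp [k₁, k₂]
    have h13 : k₁ ≠ k₃ := by simp [k₁, k₃]
    have h23 : k₂ ≠ k₃ := by simp [k₂, k₃]
    rw [Finset.set_biInter_insert, Finset.set_biInter_insert, Finset.set_biInter_singleton,
      Finset.prod_insert (by simp [h12, h13]), Finset.prod_insert (by simp [h23]),
      Finset.prod_singleton] at hmeas
    have e1 : F k₁ ⁻¹' {1} = {ω | U v ω = 1} := rfl
    have e2 : F k₂ ⁻¹' {1} = {ω | ξ v i ω = 1} := rfl
    have e3 : F k₃ ⁻¹' {1} = {ω | η v j ω = 1} := rfl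
    rw [hsets, Set.inter_assoc, ← e1, ← e2, ← e3, hmeas, e1, e2, e3, hUp, hξq, hηq,
      ← ENNReal.ofReal_mul hq₁.le, ← ENNReal.ofReal_mul hp.le,
      ENNReal.toReal_ofReal (by positivity)]
    ring
  -- expand the sum
  have hexpand : ∀ ω, (∑ v, U v ω * (∑ i, ξ v i ω) * (∑ j, η v j ω))
      = ∑ v, ∑ i, ∑ j, U v ω * ξ v i ω * η v j ω := by
    intro ω
    refine Finset.sum_congr rfl fun v _ => ?_
    rw [mul_assoc, Finset.sum_mul_sum, Finset.mul_sum]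
    refine Finset.sum_congr rfl fun i _ => ?_
    rw [Finset.mul_sum]
    exact Finset.sum_congr rfl fun j _ => by ring
  have hint : ∀ (v : ι) (i : Fin (a v)) (j : Fin (b v)),
      Integrable (fun ω => U v ω * ξ v i ω * η v j ω) μ := by
    intro v i j
    refine integrable_of_01 μ _ (((hUm v).mul (hξm v i)).mul (hηm v j)) fun ω => ?_
    rcases hU01 v ω with h1 | h1 <;> rcases hξ01 v i ω with h2 | h2 <;>
      rcases hη01 v j ω with h3 | h3 <;> simp [h1, h2, h3]
  calc ∫ ω, (1 / (p * q₁ * q₂)) * ∑ v, U v ω * (∑ i, ξ v i ω) * (∑ j, η v j ω) ∂μ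
      = (1 / (p * q₁ * q₂)) * ∫ ω, ∑ v, ∑ i, ∑ j, U v ω * ξ v i ω * η v j ω ∂μ := by
        rw [integral_const_mul]
        congr 1
        exact integral_congr_ae (Filter.Eventually.of_forall fun ω => hexpand ω)
    _ = (1 / (p * q₁ * q₂)) * ∑ v, ∑ i, ∑ j, ∫ ω, U v ω * ξ v i ω * η v j ω ∂μ := by
        congr 1
        rw [integral_finset_sum _ (fun v _ => integrable_finset_sum _
          (fun i _ => integrable_finset_sum _ (fun j _ => hint v i j)))]
        refine Finset.sum_congr rfl fun v _ => ?_
        rw [integral_finset_sum _ (fun i _ => integrable_finset_sum _ (fun j _ => hint v i j))]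
        refine Finset.sum_congr rfl fun i _ => ?_
        exact integral_finset_sum _ (fun j _ => hint v i j)
    _ = ∑ v, (a v : ℝ) * (b v : ℝ) := by
        simp only [key, Finset.sum_const, Finset.card_univ, Fintype.card_fin, nsmul_eq_mul,
          Finset.mul_sum]
        refine Finset.sum_congr rfl fun v _ => ?_
        field_simp
end

section
/- (Lemma: variance of the count estimator.) In the UBS sampling model, Var(Ĵ_count) = ((1−p)/p)·γ_{2,2} + ((1−q₂)/(p q₂))·γ_{2,1} + ((1−q₁)/(p q₁))·γ_{1,2} + ((1−q₁)(1−q₂)/(p q₁ q₂))·γ_{1,1}. -/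
open MeasureTheory ProbabilityTheory

section Aux
variable {Ω : Type*} [MeasurableSpace Ω] {μ : Measure Ω} [IsProbabilityMeasure μ]

lemma ubs_integral_of_01 {X : Ω → ℝ} (hm : Measurable X)
    (h01 : ∀ ω, X ω = 0 ∨ X ω = 1) {r : ℝ} (hr : 0 ≤ r)
    (hX : μ {ω | X ω = 1} = ENNReal.ofReal r) : μ[X] = r := by
  have hset : MeasurableSet {ω | X ω = 1} := hm (measurableSet_singleton 1)
  have hXi : X = Set.indicator {ω | X ω = 1} (fun _ => (1:ℝ)) := by
    funext ω
    rcases h01 ω with h | h <;> simp [Set.indicator_apply, h]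
  rw [hXi, integral_indicator_const _ hset, measureReal_def, hX, ENNReal.toReal_ofReal hr, smul_eq_mul, mul_one]

lemma ubs_memℒp_of_01 {X : Ω → ℝ} (hm : Measurable X)
    (h01 : ∀ ω, X ω = 0 ∨ X ω = 1) : MemLp X 2 μ := by
  refine memLp_of_bounded (a := 0) (b := 1) (Filter.Eventually.of_forall fun ω => ?_)
    hm.aestronglyMeasurable 2
  rcases h01 ω with h | h <;> simp [h]

lemma ubs_sq_of_01 {X : Ω → ℝ} (h01 : ∀ ω, X ω = 0 ∨ X ω = 1) : X ^ 2 = X := by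
  funext ω
  rcases h01 ω with h | h <;> simp [h]

lemma ubs_variance_of_01 {X : Ω → ℝ} (hm : Measurable X)
    (h01 : ∀ ω, X ω = 0 ∨ X ω = 1) {r : ℝ} (hr : 0 ≤ r)
    (hX : μ {ω | X ω = 1} = ENNReal.ofReal r) : variance X μ = r - r ^ 2 := by
  rw [variance_eq_sub (ubs_memℒp_of_01 hm h01), ubs_sq_of_01 h01,
    ubs_integral_of_01 hm h01 hr hX]

lemma ubs_indep_of_groups {κ : Type*} {f : κ → Ω → ℝ}
    (hIndep : iIndepFun f μ)
    (hf : ∀ k, Measurable (f k)) (S T : Finset κ) (hST : Disjoint S T)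
    {φ : ((k : S) → ℝ) → ℝ} {ψ : ((k : T) → ℝ) → ℝ}
    (hφ : Measurable φ) (hψ : Measurable ψ) :
    IndepFun (fun ω => φ fun k => f k ω) (fun ω => ψ fun k => f k ω) μ :=
  (hIndep.indepFun_finset S T hST hf).comp hφ hψ

end Aux

set_option maxHeartbeats 2000000 in
/-- **Variance of the UBS count estimator.**
Join-frequency model: `ι` indexes join-key values, `a b : ι → ℕ` are the key frequencies in the
two tables.  UBS sampling model: `U v` is Bernoulli(`p`) (the universe sampler), `ξ v i` are
Bernoulli(`q₁`) and `η v j` are Bernoulli(`q₂`) (the uniform samplers for the tuples of each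
table), and the whole family is mutually independent.  The sampled-join count is
`Z ω = ∑ v, U v ω * (∑ i, ξ v i ω) * (∑ j, η v j ω)` and the count estimator is
`Ĵ_count = Z / (p q₁ q₂)`.  Then
`Var(Ĵ_count) = ((1−p)/p)·γ₂₂ + ((1−q₂)/(p q₂))·γ₂₁ + ((1−q₁)/(p q₁))·γ₁₂
+ ((1−q₁)(1−q₂)/(p q₁ q₂))·γ₁₁`, where `γᵢⱼ = ∑ v, (a v)^i (b v)^j`. -/
theorem count_estimator_variance
    {Ω : Type*} [MeasurableSpace Ω] (μ : Measure Ω) [IsProbabilityMeasure μ]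
    {ι : Type*} [Fintype ι]
    (a b : ι → ℕ) (p q₁ q₂ : ℝ)
    (hp : 0 < p) (hp1 : p ≤ 1) (hq₁ : 0 < q₁) (hq₁1 : q₁ ≤ 1) (hq₂ : 0 < q₂) (hq₂1 : q₂ ≤ 1)
    (U : ι → Ω → ℝ) (ξ : (v : ι) → Fin (a v) → Ω → ℝ) (η : (v : ι) → Fin (b v) → Ω → ℝ)
    (hUm : ∀ v, Measurable (U v))
    (hξm : ∀ v i, Measurable (ξ v i))
    (hηm : ∀ v j, Measurable (η v j))
    (hU01 : ∀ v ω, U v ω = 0 ∨ U v ω = 1)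
    (hξ01 : ∀ v i ω, ξ v i ω = 0 ∨ ξ v i ω = 1)
    (hη01 : ∀ v j ω, η v j ω = 0 ∨ η v j ω = 1)
    (hUp : ∀ v, μ {ω | U v ω = 1} = ENNReal.ofReal p)
    (hξq : ∀ v i, μ {ω | ξ v i ω = 1} = ENNReal.ofReal q₁)
    (hηq : ∀ v j, μ {ω | η v j ω = 1} = ENNReal.ofReal q₂)
    (hIndep : iIndepFun
      (Sum.elim (fun v : ι => U v)
        (Sum.elim (fun vi : Σ v : ι, Fin (a v) => ξ vi.1 vi.2)
                  (fun vj : Σ v : ι, Fin (b v) => η vj.1 vj.2))) μ) :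
    variance (fun ω => (1 / (p * q₁ * q₂)) *
        ∑ v, U v ω * (∑ i, ξ v i ω) * (∑ j, η v j ω)) μ
      = ((1 - p) / p) * (∑ v, (a v : ℝ) ^ 2 * (b v : ℝ) ^ 2)
        + ((1 - q₂) / (p * q₂)) * (∑ v, (a v : ℝ) ^ 2 * (b v : ℝ))
        + ((1 - q₁) / (p * q₁)) * (∑ v, (a v : ℝ) * (b v : ℝ) ^ 2)
        + ((1 - q₁) * (1 - q₂) / (p * q₁ * q₂)) * (∑ v, (a v : ℝ) * (b v : ℝ)) := by
  classical
  set F := (Sum.elim (fun v : ι => U v)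
      (Sum.elim (fun vi : Σ v : ι, Fin (a v) => ξ vi.1 vi.2)
                (fun vj : Σ v : ι, Fin (b v) => η vj.1 vj.2))) with hF
  have hFm : ∀ k, Measurable (F k) := by
    rintro (v | vi | vj)
    exacts [hUm v, hξm vi.1 vi.2, hηm vj.1 vj.2]
  -- The per-key random variables
  set S : ι → Ω → ℝ := fun v ω => ∑ i, ξ v i ω with hS
  set T : ι → Ω → ℝ := fun v ω => ∑ j, η v j ω with hT
  set W : ι → Ω → ℝ := fun v => U v * (S v * T v) with hW
  have hSm : ∀ v, Measurable (S v) := fun v => Finset.measurable_sum _ fun i _ => hξm v i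
  have hTm : ∀ v, Measurable (T v) := fun v => Finset.measurable_sum _ fun j _ => hηm v j
  have hWm : ∀ v, Measurable (W v) := fun v => (hUm v).mul ((hSm v).mul (hTm v))
  -- index groups
  set KA : ι → Finset (ι ⊕ ((Σ v : ι, Fin (a v)) ⊕ (Σ v : ι, Fin (b v)))) :=
    fun v => Finset.univ.image fun i : Fin (a v) => Sum.inr (Sum.inl ⟨v, i⟩) with hKA
  set KB : ι → Finset (ι ⊕ ((Σ v : ι, Fin (a v)) ⊕ (Σ v : ι, Fin (b v)))) :=
    fun v => Finset.univ.image fun j : Fin (b v) => Sum.inr (Sum.inr ⟨v, j⟩) with hKB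
  have hmemA : ∀ v (i : Fin (a v)), Sum.inr (Sum.inl ⟨v, i⟩) ∈ KA v := by
    intro v i; simp [hKA]
  have hmemB : ∀ v (j : Fin (b v)), Sum.inr (Sum.inr ⟨v, j⟩) ∈ KB v := by
    intro v j; simp [hKB]
  have hdisjAB : ∀ v v' : ι, Disjoint (KA v) (KB v') := by
    intro v v'
    simp [Finset.disjoint_left, hKA, hKB]
  -- bounds
  have hSb : ∀ v ω, S v ω ∈ Set.Icc (0:ℝ) (a v) := by
    intro v ω
    constructor
    · exact Finset.sum_nonneg fun i _ => by rcases hξ01 v i ω with h | h <;> simp [h]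
    · calc S v ω ≤ ∑ _i : Fin (a v), (1:ℝ) :=
            Finset.sum_le_sum fun i _ => by rcases hξ01 v i ω with h | h <;> simp [h]
        _ = a v := by simp
  have hTb : ∀ v ω, T v ω ∈ Set.Icc (0:ℝ) (b v) := by
    intro v ω
    constructor
    · exact Finset.sum_nonneg fun j _ => by rcases hη01 v j ω with h | h <;> simp [h]
    · calc T v ω ≤ ∑ _j : Fin (b v), (1:ℝ) :=
            Finset.sum_le_sum fun j _ => by rcases hη01 v j ω with h | h <;> simp [h]
        _ = b v := by simp
  have hUb : ∀ v ω, U v ω ∈ Set.Icc (0:ℝ) 1 := by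
    intro v ω; rcases hU01 v ω with h | h <;> simp [h]
  have hWb : ∀ v ω, W v ω ∈ Set.Icc (0:ℝ) ((a v) * (b v)) := by
    intro v ω
    have h1 := hUb v ω; have h2 := hSb v ω; have h3 := hTb v ω
    constructor
    · exact mul_nonneg h1.1 (mul_nonneg h2.1 h3.1)
    · have hst : S v ω * T v ω ≤ (a v : ℝ) * (b v : ℝ) :=
        mul_le_mul h2.2 h3.2 h3.1 (by positivity)
      calc W v ω = U v ω * (S v ω * T v ω) := rfl
        _ ≤ 1 * ((a v : ℝ) * (b v : ℝ)) :=
            mul_le_mul h1.2 hst (mul_nonneg h2.1 h3.1) zero_le_one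
        _ = (a v : ℝ) * (b v : ℝ) := one_mul _
  have hWmem : ∀ v, MemLp (W v) 2 μ := fun v =>
    memLp_of_bounded (Filter.Eventually.of_forall (hWb v)) (hWm v).aestronglyMeasurable 2
  have hSmem : ∀ v, MemLp (S v) 2 μ := fun v =>
    memLp_of_bounded (Filter.Eventually.of_forall (hSb v)) (hSm v).aestronglyMeasurable 2
  have hTmem : ∀ v, MemLp (T v) 2 μ := fun v =>
    memLp_of_bounded (Filter.Eventually.of_forall (hTb v)) (hTm v).aestronglyMeasurable 2
  -- expectations of the basic variables
  have hEU : ∀ v, μ[U v] = p := fun v => ubs_integral_of_01 (hUm v) (hU01 v) hp.le (hUp v)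
  have hES : ∀ v, μ[S v] = (a v : ℝ) * q₁ := by
    intro v
    have : μ[S v] = ∑ i : Fin (a v), μ[ξ v i] := by
      rw [hS]
      exact integral_finset_sum _ fun i _ =>
        (ubs_memℒp_of_01 (hξm v i) (hξ01 v i)).integrable one_le_two
    rw [this]
    calc (∑ i : Fin (a v), μ[ξ v i]) = ∑ _i : Fin (a v), q₁ :=
          Finset.sum_congr rfl fun i _ => ubs_integral_of_01 (hξm v i) (hξ01 v i) hq₁.le (hξq v i)
      _ = (a v : ℝ) * q₁ := by simp [mul_comm]
  have hET : ∀ v, μ[T v] = (b v : ℝ) * q₂ := by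
    intro v
    have : μ[T v] = ∑ j : Fin (b v), μ[η v j] := by
      rw [hT]
      exact integral_finset_sum _ fun j _ =>
        (ubs_memℒp_of_01 (hηm v j) (hη01 v j)).integrable one_le_two
    rw [this]
    calc (∑ j : Fin (b v), μ[η v j]) = ∑ _j : Fin (b v), q₂ :=
          Finset.sum_congr rfl fun j _ => ubs_integral_of_01 (hηm v j) (hη01 v j) hq₂.le (hηq v j)
      _ = (b v : ℝ) * q₂ := by simp [mul_comm]
  -- variances of the sums S and T
  have hVarS : ∀ v, variance (S v) μ = (a v : ℝ) * (q₁ - q₁ ^ 2) := by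
    intro v
    have heq : S v = ∑ i : Fin (a v), ξ v i := by
      funext ω; rw [hS]; simp [Finset.sum_apply]
    rw [heq, IndepFun.variance_sum (fun i _ => ubs_memℒp_of_01 (hξm v i) (hξ01 v i))
      (fun i _ j _ hij => hIndep.indepFun (i := Sum.inr (Sum.inl ⟨v, i⟩))
        (j := Sum.inr (Sum.inl ⟨v, j⟩)) (by simp [hij]))]
    calc (∑ i : Fin (a v), variance (ξ v i) μ) = ∑ _i : Fin (a v), (q₁ - q₁ ^ 2) :=
          Finset.sum_congr rfl fun i _ =>
            ubs_variance_of_01 (hξm v i) (hξ01 v i) hq₁.le (hξq v i)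
      _ = (a v : ℝ) * (q₁ - q₁ ^ 2) := by simp [mul_comm]; ring
  have hVarT : ∀ v, variance (T v) μ = (b v : ℝ) * (q₂ - q₂ ^ 2) := by
    intro v
    have heq : T v = ∑ j : Fin (b v), η v j := by
      funext ω; rw [hT]; simp [Finset.sum_apply]
    rw [heq, IndepFun.variance_sum (fun j _ => ubs_memℒp_of_01 (hηm v j) (hη01 v j))
      (fun i _ j _ hij => hIndep.indepFun (i := Sum.inr (Sum.inr ⟨v, i⟩))
        (j := Sum.inr (Sum.inr ⟨v, j⟩)) (by simp [hij]))]
    calc (∑ j : Fin (b v), variance (η v j) μ) = ∑ _j : Fin (b v), (q₂ - q₂ ^ 2) :=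
          Finset.sum_congr rfl fun j _ =>
            ubs_variance_of_01 (hηm v j) (hη01 v j) hq₂.le (hηq v j)
      _ = (b v : ℝ) * (q₂ - q₂ ^ 2) := by simp [mul_comm]; ring
  have hES2 : ∀ v, μ[(S v) ^ 2] = (a v : ℝ) * (q₁ - q₁ ^ 2) + ((a v : ℝ) * q₁) ^ 2 := by
    intro v
    have h := variance_eq_sub (hSmem v)
    rw [hVarS v, hES v] at h
    linarith
  have hET2 : ∀ v, μ[(T v) ^ 2] = (b v : ℝ) * (q₂ - q₂ ^ 2) + ((b v : ℝ) * q₂) ^ 2 := by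
    intro v
    have h := variance_eq_sub (hTmem v)
    rw [hVarT v, hET v] at h
    linarith
  -- independence of S and T, and of U and S*T
  have hIndST : ∀ v, IndepFun (S v) (T v) μ := by
    intro v
    have h := ubs_indep_of_groups hIndep hFm (KA v) (KB v) (hdisjAB v v)
      (φ := fun g => ∑ i : Fin (a v), g ⟨Sum.inr (Sum.inl ⟨v, i⟩), hmemA v i⟩)
      (ψ := fun g => ∑ j : Fin (b v), g ⟨Sum.inr (Sum.inr ⟨v, j⟩), hmemB v j⟩)
      (by exact Finset.measurable_sum _ fun i _ => measurable_pi_apply _)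
      (by exact Finset.measurable_sum _ fun j _ => measurable_pi_apply _)
    refine h.congr (Filter.Eventually.of_forall fun ω => ?_)
      (Filter.Eventually.of_forall fun ω => ?_) <;> simp [hF, hS, hT]
  have hIndU : ∀ v, IndepFun (U v) (S v * T v) μ := by
    intro v
    have hd : Disjoint {Sum.inl v} (KA v ∪ KB v) := by
      simp [Finset.disjoint_left, hKA, hKB]
    have h := ubs_indep_of_groups hIndep hFm {Sum.inl v} (KA v ∪ KB v) hd
      (φ := fun g => g ⟨Sum.inl v, Finset.mem_singleton_self _⟩)
      (ψ := fun g =>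
        (∑ i : Fin (a v), g ⟨Sum.inr (Sum.inl ⟨v, i⟩), Finset.mem_union_left _ (hmemA v i)⟩) *
        (∑ j : Fin (b v), g ⟨Sum.inr (Sum.inr ⟨v, j⟩), Finset.mem_union_right _ (hmemB v j)⟩))
      (by exact measurable_pi_apply _)
      (by exact Measurable.mul (Finset.measurable_sum _ fun i _ => measurable_pi_apply _)
            (Finset.measurable_sum _ fun j _ => measurable_pi_apply _))
    refine h.congr (Filter.Eventually.of_forall fun ω => ?_)
      (Filter.Eventually.of_forall fun ω => ?_) <;> simp [hF, hS, hT]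
  -- first and second moments of W
  have hEW : ∀ v, μ[W v] = p * (((a v : ℝ) * q₁) * ((b v : ℝ) * q₂)) := by
    intro v
    have hWv : W v = U v * (S v * T v) := rfl
    rw [hWv, (hIndU v).integral_mul_eq_mul_integral (hUm v).aestronglyMeasurable
      ((hSm v).mul (hTm v)).aestronglyMeasurable,
      (hIndST v).integral_mul_eq_mul_integral (hSm v).aestronglyMeasurable (hTm v).aestronglyMeasurable,
      hEU v, hES v, hET v]
  have hEW2 : ∀ v, μ[(W v) ^ 2]
      = p * (((a v : ℝ) * (q₁ - q₁ ^ 2) + ((a v : ℝ) * q₁) ^ 2)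
          * ((b v : ℝ) * (q₂ - q₂ ^ 2) + ((b v : ℝ) * q₂) ^ 2)) := by
    intro v
    have hW2 : (W v) ^ 2 = U v * ((S v * T v) ^ 2) := by
      funext ω
      rcases hU01 v ω with h | h <;>
        simp [hW, Pi.pow_apply, Pi.mul_apply, h, mul_pow]
    have hind2 : IndepFun (U v) ((S v * T v) ^ 2) μ := by
      have := (hIndU v).comp measurable_id (measurable_id.pow_const 2)
      exact this
    have hindST2 : IndepFun ((S v) ^ 2) ((T v) ^ 2) μ := by
      have := (hIndST v).comp (measurable_id.pow_const 2) (measurable_id.pow_const 2)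
      exact this
    rw [hW2, hind2.integral_mul_eq_mul_integral (hUm v).aestronglyMeasurable
        (((hSm v).mul (hTm v)).pow_const 2).aestronglyMeasurable]
    have hST2 : (S v * T v) ^ 2 = (S v) ^ 2 * (T v) ^ 2 := by
      funext ω; simp [Pi.pow_apply, Pi.mul_apply, mul_pow]
    rw [hST2, hindST2.integral_mul_eq_mul_integral ((hSm v).pow_const 2).aestronglyMeasurable
        ((hTm v).pow_const 2).aestronglyMeasurable,
      hEU v, hES2 v, hET2 v]
  have hVarW : ∀ v, variance (W v) μ
      = p * (((a v : ℝ) * (q₁ - q₁ ^ 2) + ((a v : ℝ) * q₁) ^ 2)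
          * ((b v : ℝ) * (q₂ - q₂ ^ 2) + ((b v : ℝ) * q₂) ^ 2))
        - (p * (((a v : ℝ) * q₁) * ((b v : ℝ) * q₂))) ^ 2 := by
    intro v
    rw [variance_eq_sub (hWmem v), hEW2 v, hEW v]
  -- pairwise independence of the W's
  have hPairW : ∀ v v' : ι, v ≠ v' → IndepFun (W v) (W v') μ := by
    intro v v' hvv'
    have hd : Disjoint (insert (Sum.inl v) (KA v ∪ KB v))
        (insert (Sum.inl v') (KA v' ∪ KB v')) := by
      rw [Finset.disjoint_left]
      rintro x hx hx'
      simp only [hKA, hKB, Finset.mem_insert, Finset.mem_union, Finset.mem_image,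
        Finset.mem_univ, true_and] at hx hx'
      rcases hx with rfl | ⟨i, rfl⟩ | ⟨j, rfl⟩ <;>
        rcases hx' with h | ⟨i', h⟩ | ⟨j', h⟩ <;>
        first
          | exact hvv' (Sum.inl.inj h)
          | exact hvv' (congrArg Sigma.fst (Sum.inl.inj (Sum.inr.inj h))).symm
          | exact hvv' (congrArg Sigma.fst (Sum.inr.inj (Sum.inr.inj h))).symm
          | simp at h
    have h := ubs_indep_of_groups hIndep hFm
      (insert (Sum.inl v) (KA v ∪ KB v)) (insert (Sum.inl v') (KA v' ∪ KB v')) hd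
      (φ := fun g => g ⟨Sum.inl v, Finset.mem_insert_self _ _⟩ *
        ((∑ i : Fin (a v), g ⟨Sum.inr (Sum.inl ⟨v, i⟩),
            Finset.mem_insert_of_mem (Finset.mem_union_left _ (hmemA v i))⟩) *
         (∑ j : Fin (b v), g ⟨Sum.inr (Sum.inr ⟨v, j⟩),
            Finset.mem_insert_of_mem (Finset.mem_union_right _ (hmemB v j))⟩)))
      (ψ := fun g => g ⟨Sum.inl v', Finset.mem_insert_self _ _⟩ *
        ((∑ i : Fin (a v'), g ⟨Sum.inr (Sum.inl ⟨v', i⟩),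
            Finset.mem_insert_of_mem (Finset.mem_union_left _ (hmemA v' i))⟩) *
         (∑ j : Fin (b v'), g ⟨Sum.inr (Sum.inr ⟨v', j⟩),
            Finset.mem_insert_of_mem (Finset.mem_union_right _ (hmemB v' j))⟩)))
      (by exact Measurable.mul (measurable_pi_apply _) (Measurable.mul
            (Finset.measurable_sum _ fun i _ => measurable_pi_apply _)
            (Finset.measurable_sum _ fun j _ => measurable_pi_apply _)))
      (by exact Measurable.mul (measurable_pi_apply _) (Measurable.mul
            (Finset.measurable_sum _ fun i _ => measurable_pi_apply _)
            (Finset.measurable_sum _ fun j _ => measurable_pi_apply _)))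
    refine h.congr (Filter.Eventually.of_forall fun ω => ?_)
      (Filter.Eventually.of_forall fun ω => ?_) <;> simp [hF, hW, hS, hT]
  -- assemble
  have hgoal1 : (fun ω => (1 / (p * q₁ * q₂)) *
      ∑ v, U v ω * (∑ i, ξ v i ω) * (∑ j, η v j ω))
      = fun ω => (1 / (p * q₁ * q₂)) * (∑ v : ι, W v) ω := by
    funext ω
    simp only [Finset.sum_apply, hW, Pi.mul_apply, hS, hT, mul_assoc]
  rw [hgoal1, variance_const_mul, IndepFun.variance_sum (fun v _ => hWmem v)
    (fun v _ v' _ h => hPairW v v' h), Finset.mul_sum]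
  have hterm : ∀ v : ι, (1 / (p * q₁ * q₂)) ^ 2 * variance (W v) μ
      = ((1 - p) / p) * ((a v : ℝ) ^ 2 * (b v : ℝ) ^ 2)
        + ((1 - q₂) / (p * q₂)) * ((a v : ℝ) ^ 2 * (b v : ℝ))
        + ((1 - q₁) / (p * q₁)) * ((a v : ℝ) * (b v : ℝ) ^ 2)
        + ((1 - q₁) * (1 - q₂) / (p * q₁ * q₂)) * ((a v : ℝ) * (b v : ℝ)) := by
    intro v
    rw [hVarW v]
    field_simp [hp.ne', hq₁.ne', hq₂.ne']
    ring
  rw [Finset.sum_congr rfl fun v _ => hterm v]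
  rw [Finset.sum_add_distrib, Finset.sum_add_distrib, Finset.sum_add_distrib,
    ← Finset.mul_sum, ← Finset.mul_sum, ← Finset.mul_sum, ← Finset.mul_sum]
end

section
/- (Lemma: equal universe rates are optimal for COUNT.) Fix p₁ ∈ (0,1], q₁ ∈ (0,1], and an effective sampling rate ε₂ ∈ (0,1] with ε₂ ≤ p₁. Then for every p₂ with ε₂ ≤ p₂ ≤ 1 (and corresponding uniform rate q₂ = ε₂/p₂), W_count(p₁, q₁, p₂, ε₂/p₂) ≥ W_count(p₁, q₁, p₁, ε₂/p₁); that is, the count-estimator variance is minimized over p₂ ∈ [ε₂, 1] at p₂ = p₁. -/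
noncomputable def gammaMoment {ι : Type*} [Fintype ι] (a b : ι → ℕ) (i j : ℕ) : ℝ :=
  ∑ v, (a v : ℝ) ^ i * (b v : ℝ) ^ j

noncomputable def Wcount {ι : Type*} [Fintype ι] (a b : ι → ℕ) (p₁ q₁ p₂ q₂ : ℝ) : ℝ :=
  ((1 - min p₁ p₂) / min p₁ p₂) * gammaMoment a b 2 2
    + ((1 - q₂) / (min p₁ p₂ * q₂)) * gammaMoment a b 2 1
    + ((1 - q₁) / (min p₁ p₂ * q₁)) * gammaMoment a b 1 2
    + ((1 - q₁) * (1 - q₂) / (min p₁ p₂ * q₁ * q₂)) * gammaMoment a b 1 1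

lemma gm_nonneg {ι : Type*} [Fintype ι] (a b : ι → ℕ) (i j : ℕ) :
    0 ≤ gammaMoment a b i j :=
  Finset.sum_nonneg fun v _ => by positivity

lemma gm_le_two {ι : Type*} [Fintype ι] (a b : ι → ℕ) (i : ℕ) :
    gammaMoment a b i 1 ≤ gammaMoment a b i 2 := by
  refine Finset.sum_le_sum fun v _ => ?_
  have hb : b v ≤ (b v) ^ 2 := Nat.le_self_pow two_ne_zero _
  have h : (b v : ℝ) ^ 1 ≤ (b v : ℝ) ^ 2 := by
    rw [pow_one]; exact_mod_cast hb
  exact mul_le_mul_of_nonneg_left h (by positivity)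

/-- **Equal universe rates are optimal for COUNT.**  Fixing `(p₁, q₁)` for the first table and
the effective rate `ε₂` for the second (with `ε₂ ≤ p₁`), the count-estimator variance over
`p₂ ∈ [ε₂, 1]` (with uniform rate `q₂ = ε₂ / p₂`) is minimized at `p₂ = p₁`. -/
theorem equal_universe_rate_optimal_for_count
    {ι : Type*} [Fintype ι] (a b : ι → ℕ)
    (p₁ q₁ ε₂ : ℝ) (hp₁0 : 0 < p₁) (hp₁1 : p₁ ≤ 1) (hq₁0 : 0 < q₁) (hq₁1 : q₁ ≤ 1)
    (hε₂0 : 0 < ε₂) (hε₂1 : ε₂ ≤ 1) (hle : ε₂ ≤ p₁) :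
    ∀ p₂, ε₂ ≤ p₂ → p₂ ≤ 1 →
      Wcount a b p₁ q₁ p₁ (ε₂ / p₁) ≤ Wcount a b p₁ q₁ p₂ (ε₂ / p₂) := by
  intro p₂ h1 h2
  have hp₂0 : 0 < p₂ := lt_of_lt_of_le hε₂0 h1
  have h2221 := gm_le_two a b 2
  have h1211 := gm_le_two a b 1
  have hG21 := gm_nonneg a b 2 1
  have hG11 := gm_nonneg a b 1 1
  unfold Wcount
  set G22 := gammaMoment a b 2 2 with hG22def
  set G21 := gammaMoment a b 2 1 with hG21def
  set G12 := gammaMoment a b 1 2 with hG12def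
  set G11 := gammaMoment a b 1 1 with hG11def
  rw [← sub_nonneg]
  rcases le_total p₂ p₁ with h | h
  · rw [min_eq_right h, min_self]
    have key : (1 - p₂) / p₂ * G22 + (1 - ε₂ / p₂) / (p₂ * (ε₂ / p₂)) * G21 +
          (1 - q₁) / (p₂ * q₁) * G12 +
          (1 - q₁) * (1 - ε₂ / p₂) / (p₂ * q₁ * (ε₂ / p₂)) * G11 -
        ((1 - p₁) / p₁ * G22 + (1 - ε₂ / p₁) / (p₁ * (ε₂ / p₁)) * G21 +
          (1 - q₁) / (p₁ * q₁) * G12 +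
          (1 - q₁) * (1 - ε₂ / p₁) / (p₁ * q₁ * (ε₂ / p₁)) * G11) =
        (1 / p₂ - 1 / p₁) * ((G22 - G21) + ((1 - q₁) / q₁) * (G12 - G11)) := by
      field_simp
      ring
    rw [key]
    have h1 : 0 ≤ 1 / p₂ - 1 / p₁ := by
      rw [sub_nonneg]
      exact one_div_le_one_div_of_le hp₂0 h
    have h2 : 0 ≤ (G22 - G21) + ((1 - q₁) / q₁) * (G12 - G11) := by
      have : 0 ≤ (1 - q₁) / q₁ := div_nonneg (by linarith) hq₁0.le
      have := mul_nonneg this (sub_nonneg.mpr h1211)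
      linarith
    exact mul_nonneg h1 h2
  · rw [min_eq_left h, min_self]
    have key : (1 - p₁) / p₁ * G22 + (1 - ε₂ / p₂) / (p₁ * (ε₂ / p₂)) * G21 +
          (1 - q₁) / (p₁ * q₁) * G12 +
          (1 - q₁) * (1 - ε₂ / p₂) / (p₁ * q₁ * (ε₂ / p₂)) * G11 -
        ((1 - p₁) / p₁ * G22 + (1 - ε₂ / p₁) / (p₁ * (ε₂ / p₁)) * G21 +
          (1 - q₁) / (p₁ * q₁) * G12 +
          (1 - q₁) * (1 - ε₂ / p₁) / (p₁ * q₁ * (ε₂ / p₁)) * G11) =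
        ((p₂ - p₁) / (p₁ * ε₂)) * (G21 + ((1 - q₁) / q₁) * G11) := by
      field_simp
      ring
    rw [key]
    have h1 : 0 ≤ (p₂ - p₁) / (p₁ * ε₂) := by
      apply div_nonneg (by linarith) (by positivity)
    have h2 : 0 ≤ G21 + ((1 - q₁) / q₁) * G11 := by
      exact add_nonneg hG21 (mul_nonneg (div_nonneg (by linarith) hq₁0.le) hG11)
    exact mul_nonneg h1 h2
end

section
/- (Theorem: centralized count variance.) In the UBS sampling model with universe rate p satisfying max(ε₁, ε₂) ≤ p ≤ 1 and uniform rates q₁ = ε₁/p and q₂ = ε₂/p, the variance of the count estimator equals Var(Ĵ_count) = (1/p − 1)·γ_{2,2} + (1/ε₂ − 1/p)·γ_{2,1} + (1/ε₁ − 1/p)·γ_{1,2} + (p/(ε₁ε₂) − 1/ε₁ − 1/ε₂ + 1/p)·γ_{1,1}. -/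
open MeasureTheory ProbabilityTheory

lemma sum_sum_ite_real (n : ℕ) (x y : ℝ) :
    (∑ i : Fin n, ∑ j : Fin n, (if i = j then x else y))
      = n * x + ((n : ℝ) ^ 2 - n) * y := by
  have h : ∀ i : Fin n, (∑ j : Fin n, (if i = j then x else y)) = (x - y) + n * y := by
    intro i
    have : ∀ j : Fin n, (if i = j then x else y) = (if i = j then (x - y) else 0) + y := by
      intro j; split <;> ring
    rw [Finset.sum_congr rfl fun j _ => this j, Finset.sum_add_distrib]
    simp [Finset.sum_ite_eq, mul_comm]
  rw [Finset.sum_congr rfl fun i _ => h i]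
  simp [Finset.sum_add_distrib]
  ring

/-- **Centralized count variance.** -/
theorem centralized_count_variance
    {Ω : Type*} [MeasurableSpace Ω] (μ : Measure Ω) [IsProbabilityMeasure μ]
    {ι : Type*} [Fintype ι]
    (a b : ι → ℕ) (ε₁ ε₂ p q₁ q₂ : ℝ)
    (hε₁ : 0 < ε₁) (hε₁1 : ε₁ ≤ 1) (hε₂ : 0 < ε₂) (hε₂1 : ε₂ ≤ 1)
    (hplb : max ε₁ ε₂ ≤ p) (hp1 : p ≤ 1)
    (hq₁def : q₁ = ε₁ / p) (hq₂def : q₂ = ε₂ / p)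
    (U : ι → Ω → ℝ) (ξ : (v : ι) → Fin (a v) → Ω → ℝ) (η : (v : ι) → Fin (b v) → Ω → ℝ)
    (hUm : ∀ v, Measurable (U v))
    (hξm : ∀ v i, Measurable (ξ v i))
    (hηm : ∀ v j, Measurable (η v j))
    (hU01 : ∀ v ω, U v ω = 0 ∨ U v ω = 1)
    (hξ01 : ∀ v i ω, ξ v i ω = 0 ∨ ξ v i ω = 1)
    (hη01 : ∀ v j ω, η v j ω = 0 ∨ η v j ω = 1)
    (hUp : ∀ v, μ {ω | U v ω = 1} = ENNReal.ofReal p)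
    (hξq : ∀ v i, μ {ω | ξ v i ω = 1} = ENNReal.ofReal q₁)
    (hηq : ∀ v j, μ {ω | η v j ω = 1} = ENNReal.ofReal q₂)
    (hIndep : iIndepFun
      (Sum.elim (fun v : ι => U v)
        (Sum.elim (fun vi : Σ v : ι, Fin (a v) => ξ vi.1 vi.2)
                  (fun vj : Σ v : ι, Fin (b v) => η vj.1 vj.2))) μ) :
    variance (fun ω => (1 / (p * q₁ * q₂)) *
        ∑ v, U v ω * (∑ i, ξ v i ω) * (∑ j, η v j ω)) μ
      = (1 / p - 1) * (∑ v, (a v : ℝ) ^ 2 * (b v : ℝ) ^ 2)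
        + (1 / ε₂ - 1 / p) * (∑ v, (a v : ℝ) ^ 2 * (b v : ℝ))
        + (1 / ε₁ - 1 / p) * (∑ v, (a v : ℝ) * (b v : ℝ) ^ 2)
        + (p / (ε₁ * ε₂) - 1 / ε₁ - 1 / ε₂ + 1 / p) * (∑ v, (a v : ℝ) * (b v : ℝ)) := by
  classical
  have hp : 0 < p := lt_of_lt_of_le hε₁ ((le_max_left ε₁ ε₂).trans hplb)
  have hq₁ : 0 < q₁ := by rw [hq₁def]; positivity
  have hq₂ : 0 < q₂ := by rw [hq₂def]; positivity
  -- basic facts about 0/1-valued random variables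
  have h01abs : ∀ x : ℝ, (x = 0 ∨ x = 1) → 0 ≤ x ∧ x ≤ 1 := by
    rintro x (rfl | rfl) <;> norm_num
  have hE01 : ∀ (f : Ω → ℝ) (r : ℝ), Measurable f → (∀ ω, f ω = 0 ∨ f ω = 1) →
      0 ≤ r → μ {ω | f ω = 1} = ENNReal.ofReal r → ∫ ω, f ω ∂μ = r := by
    intro f r hm h01 hr hμs
    have hfs : MeasurableSet {ω | f ω = 1} := hm (measurableSet_singleton 1)
    have hind : f = Set.indicator {ω | f ω = 1} (fun _ => (1 : ℝ)) := by
      funext ω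
      rcases h01 ω with h | h <;> simp [Set.indicator_apply, h]
    rw [hind, integral_indicator_const _ hfs, measureReal_def, hμs, ENNReal.toReal_ofReal hr,
      smul_eq_mul, mul_one]
  have hint : ∀ (f : Ω → ℝ) (C : ℝ), Measurable f → (∀ ω, |f ω| ≤ C) → Integrable f μ := by
    intro f C hm hb
    exact memLp_one_iff_integrable.mp <| MemLp.of_bound hm.aestronglyMeasurable C
      (Filter.Eventually.of_forall (by simpa [Real.norm_eq_abs] using hb))
  -- the family as a single function
  set F := (Sum.elim (fun v : ι => U v)
      (Sum.elim (fun vi : Σ v : ι, Fin (a v) => ξ vi.1 vi.2)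
                (fun vj : Σ v : ι, Fin (b v) => η vj.1 vj.2))) with hFdef
  have hFm : ∀ k, Measurable (F k) := by
    rw [hFdef]; rintro (v | vi | vj)
    · exact hUm v
    · exact hξm vi.1 vi.2
    · exact hηm vj.1 vj.2
  set A : ι → Ω → ℝ := fun v ω => ∑ i, ξ v i ω with hAdef
  set B : ι → Ω → ℝ := fun v ω => ∑ j, η v j ω with hBdef
  set X : ι → Ω → ℝ := fun v ω => U v ω * A v ω * B v ω with hXdef
  have hAm : ∀ v, Measurable (A v) := fun v => Finset.measurable_sum _ fun i _ => hξm v i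
  have hBm : ∀ v, Measurable (B v) := fun v => Finset.measurable_sum _ fun j _ => hηm v j
  have hXm : ∀ v, Measurable (X v) := fun v => ((hUm v).mul (hAm v)).mul (hBm v)
  have hA0 : ∀ v ω, 0 ≤ A v ω := fun v ω =>
    Finset.sum_nonneg fun i _ => (h01abs _ (hξ01 v i ω)).1
  have hA1 : ∀ v ω, A v ω ≤ (a v : ℝ) := by
    intro v ω
    calc A v ω ≤ ∑ _i : Fin (a v), (1 : ℝ) :=
          Finset.sum_le_sum fun i _ => (h01abs _ (hξ01 v i ω)).2
      _ = (a v : ℝ) := by simp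
  have hB0 : ∀ v ω, 0 ≤ B v ω := fun v ω =>
    Finset.sum_nonneg fun j _ => (h01abs _ (hη01 v j ω)).1
  have hB1 : ∀ v ω, B v ω ≤ (b v : ℝ) := by
    intro v ω
    calc B v ω ≤ ∑ _j : Fin (b v), (1 : ℝ) :=
          Finset.sum_le_sum fun j _ => (h01abs _ (hη01 v j ω)).2
      _ = (b v : ℝ) := by simp
  have hXbd : ∀ v ω, |X v ω| ≤ (a v : ℝ) * (b v : ℝ) := by
    intro v ω
    have h1 := h01abs _ (hU01 v ω)
    have hXnn : 0 ≤ X v ω := mul_nonneg (mul_nonneg h1.1 (hA0 v ω)) (hB0 v ω)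
    rw [abs_of_nonneg hXnn]
    calc X v ω = U v ω * A v ω * B v ω := rfl
      _ ≤ 1 * (a v : ℝ) * (b v : ℝ) := by
          apply mul_le_mul (mul_le_mul h1.2 (hA1 v ω) (hA0 v ω) zero_le_one)
            (hB1 v ω) (hB0 v ω) (by positivity)
      _ = (a v : ℝ) * (b v : ℝ) := by ring
  have hXmem2 : ∀ v, MemLp (X v) 2 μ := fun v =>
    MemLp.of_bound (hXm v).aestronglyMeasurable _
      (Filter.Eventually.of_forall fun ω => by
        simpa [Real.norm_eq_abs] using hXbd v ω)
  -- index blocks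
  set TU : ι → Finset (ι ⊕ ((Σ v : ι, Fin (a v)) ⊕ (Σ v : ι, Fin (b v)))) :=
    fun v => {Sum.inl v} with hTU
  set Tξ : ι → Finset (ι ⊕ ((Σ v : ι, Fin (a v)) ⊕ (Σ v : ι, Fin (b v)))) :=
    fun v => Finset.univ.image (fun i : Fin (a v) => Sum.inr (Sum.inl ⟨v, i⟩)) with hTξ
  set Tη : ι → Finset (ι ⊕ ((Σ v : ι, Fin (a v)) ⊕ (Σ v : ι, Fin (b v)))) :=
    fun v => Finset.univ.image (fun j : Fin (b v) => Sum.inr (Sum.inr ⟨v, j⟩)) with hTη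
  have hGU : ∀ v ω, (∑ k ∈ TU v, F k ω) = U v ω := by
    intro v ω; simp [hTU, hFdef]
  have hGA : ∀ v ω, (∑ k ∈ Tξ v, F k ω) = A v ω := by
    intro v ω
    rw [hTξ]
    rw [Finset.sum_image (by intro x _ y _ h; simpa using h)]
    simp [hFdef, hAdef]
  have hGB : ∀ v ω, (∑ k ∈ Tη v, F k ω) = B v ω := by
    intro v ω
    rw [hTη]
    rw [Finset.sum_image (by intro x _ y _ h; simpa using h)]
    simp [hFdef, hBdef]
  -- generic independence of products of block sums
  have restSum : ∀ (S T : Finset (ι ⊕ ((Σ v : ι, Fin (a v)) ⊕ (Σ v : ι, Fin (b v))))),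
      S ⊆ T → ∀ g : (ι ⊕ ((Σ v : ι, Fin (a v)) ⊕ (Σ v : ι, Fin (b v)))) → ℝ,
      (∑ k : T, if (↑k ∈ S) then g ↑k else 0) = ∑ k ∈ S, g k := by
    intro S T hsub g
    rw [Finset.sum_coe_sort T (fun k => if k ∈ S then g k else 0)]
    rw [Finset.sum_ite_mem, Finset.inter_eq_right.mpr hsub]
  have hsumMeas : ∀ (W V : Finset (ι ⊕ ((Σ v : ι, Fin (a v)) ⊕ (Σ v : ι, Fin (b v))))),
      Measurable (fun g : W → ℝ => ∑ k : W, if (↑k ∈ V) then g k else 0) := by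
    intro W V
    apply Finset.measurable_sum
    intro k _
    by_cases h : (↑k : ι ⊕ ((Σ v : ι, Fin (a v)) ⊕ (Σ v : ι, Fin (b v)))) ∈ V
    · simpa [h] using measurable_pi_apply k
    · simpa [h] using (measurable_const : Measurable fun _ : W → ℝ => (0 : ℝ))
  have keyG3 : ∀ (S₁ S₂ S₃ T₁ T₂ T₃ : Finset (ι ⊕ ((Σ v : ι, Fin (a v)) ⊕ (Σ v : ι, Fin (b v)))))
      (m₁ m₂ m₃ n₁ n₂ n₃ : ℕ),
      Disjoint (S₁ ∪ S₂ ∪ S₃) (T₁ ∪ T₂ ∪ T₃) →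
      IndepFun
        (fun ω => (∑ k ∈ S₁, F k ω) ^ m₁ * (∑ k ∈ S₂, F k ω) ^ m₂ * (∑ k ∈ S₃, F k ω) ^ m₃)
        (fun ω => (∑ k ∈ T₁, F k ω) ^ n₁ * (∑ k ∈ T₂, F k ω) ^ n₂ * (∑ k ∈ T₃, F k ω) ^ n₃)
        μ := by
    intro S₁ S₂ S₃ T₁ T₂ T₃ m₁ m₂ m₃ n₁ n₂ n₃ hd
    have hS₁ : S₁ ⊆ S₁ ∪ S₂ ∪ S₃ := Finset.subset_union_left.trans Finset.subset_union_left
    have hS₂ : S₂ ⊆ S₁ ∪ S₂ ∪ S₃ := Finset.subset_union_right.trans Finset.subset_union_left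
    have hS₃ : S₃ ⊆ S₁ ∪ S₂ ∪ S₃ := Finset.subset_union_right
    have hT₁ : T₁ ⊆ T₁ ∪ T₂ ∪ T₃ := Finset.subset_union_left.trans Finset.subset_union_left
    have hT₂ : T₂ ⊆ T₁ ∪ T₂ ∪ T₃ := Finset.subset_union_right.trans Finset.subset_union_left
    have hT₃ : T₃ ⊆ T₁ ∪ T₂ ∪ T₃ := Finset.subset_union_right
    have hφm : Measurable (fun g : (S₁ ∪ S₂ ∪ S₃ : Finset _) → ℝ =>
        (∑ k : (S₁ ∪ S₂ ∪ S₃ : Finset _), if (↑k ∈ S₁) then g k else 0) ^ m₁ *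
        (∑ k : (S₁ ∪ S₂ ∪ S₃ : Finset _), if (↑k ∈ S₂) then g k else 0) ^ m₂ *
        (∑ k : (S₁ ∪ S₂ ∪ S₃ : Finset _), if (↑k ∈ S₃) then g k else 0) ^ m₃) :=
      (((hsumMeas _ S₁).pow_const m₁).mul ((hsumMeas _ S₂).pow_const m₂)).mul
        ((hsumMeas _ S₃).pow_const m₃)
    have hψm : Measurable (fun g : (T₁ ∪ T₂ ∪ T₃ : Finset _) → ℝ =>
        (∑ k : (T₁ ∪ T₂ ∪ T₃ : Finset _), if (↑k ∈ T₁) then g k else 0) ^ n₁ *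
        (∑ k : (T₁ ∪ T₂ ∪ T₃ : Finset _), if (↑k ∈ T₂) then g k else 0) ^ n₂ *
        (∑ k : (T₁ ∪ T₂ ∪ T₃ : Finset _), if (↑k ∈ T₃) then g k else 0) ^ n₃) :=
      (((hsumMeas _ T₁).pow_const n₁).mul ((hsumMeas _ T₂).pow_const n₂)).mul
        ((hsumMeas _ T₃).pow_const n₃)
    have h := IndepFun.comp (hIndep.indepFun_finset _ _ hd hFm) hφm hψm
    convert h using 1
    · funext ω
      simp only [Function.comp_apply]
      rw [restSum S₁ _ hS₁ (fun k => F k ω), restSum S₂ _ hS₂ (fun k => F k ω),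
        restSum S₃ _ hS₃ (fun k => F k ω)]
    · funext ω
      simp only [Function.comp_apply]
      rw [restSum T₁ _ hT₁ (fun k => F k ω), restSum T₂ _ hT₂ (fun k => F k ω),
        restSum T₃ _ hT₃ (fun k => F k ω)]
  -- membership characterizations
  have hmemTU : ∀ (w : ι) k, k ∈ TU w ↔ k = Sum.inl w := by
    intro w k; simp [hTU]
  have hmemTξ : ∀ (w : ι) k, k ∈ Tξ w ↔ ∃ i : Fin (a w), Sum.inr (Sum.inl ⟨w, i⟩) = k := by
    intro w k; simp [hTξ]
  have hmemTη : ∀ (w : ι) k, k ∈ Tη w ↔ ∃ j : Fin (b w), Sum.inr (Sum.inr ⟨w, j⟩) = k := by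
    intro w k; simp [hTη]
  -- disjointness
  have hdUξη : ∀ v, Disjoint (TU v ∪ ∅ ∪ ∅) (Tξ v ∪ Tη v ∪ ∅) := by
    intro v
    rw [Finset.disjoint_left]
    intro k hk hk'
    simp only [Finset.union_empty, Finset.mem_union, hmemTU, hmemTξ, hmemTη] at hk hk'
    subst hk
    rcases hk' with ⟨i, h⟩ | ⟨j, h⟩ <;> simp at h
  have hdξη : ∀ v, Disjoint (Tξ v ∪ ∅ ∪ ∅) (Tη v ∪ ∅ ∪ ∅) := by
    intro v
    rw [Finset.disjoint_left]
    intro k hk hk'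
    simp only [Finset.union_empty, hmemTξ, hmemTη] at hk hk'
    obtain ⟨i, rfl⟩ := hk
    obtain ⟨j, h⟩ := hk'
    simp at h
  have hdblock : ∀ v w, v ≠ w → Disjoint (TU v ∪ Tξ v ∪ Tη v) (TU w ∪ Tξ w ∪ Tη w) := by
    intro v w hvw
    rw [Finset.disjoint_left]
    intro k hk hk'
    simp only [Finset.mem_union, hmemTU, hmemTξ, hmemTη] at hk hk'
    rcases hk with (rfl | ⟨i, rfl⟩) | ⟨j, rfl⟩ <;>
      rcases hk' with (h | ⟨i', h⟩) | ⟨j', h⟩ <;>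
        simp [hvw, Ne.symm hvw] at h
  -- independence instances
  have hABpow : ∀ (v : ι) (m n : ℕ),
      IndepFun (fun ω => A v ω ^ m) (fun ω => B v ω ^ n) μ := by
    intro v m n
    have h := keyG3 (Tξ v) ∅ ∅ (Tη v) ∅ ∅ m 0 0 n 0 0 (hdξη v)
    convert h using 1 <;> funext ω <;> simp [hGA, hGB]
  have hUABpow : ∀ (v : ι) (m n : ℕ),
      IndepFun (U v) (fun ω => A v ω ^ m * B v ω ^ n) μ := by
    intro v m n
    have h := keyG3 (TU v) ∅ ∅ (Tξ v) (Tη v) ∅ 1 0 0 m n 0 (hdUξη v)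
    convert h using 1 <;> funext ω <;> simp [hGU, hGA, hGB]
  have hXX : ∀ v w, v ≠ w → IndepFun (X v) (X w) μ := by
    intro v w hvw
    have h := keyG3 (TU v) (Tξ v) (Tη v) (TU w) (Tξ w) (Tη w) 1 1 1 1 1 1 (hdblock v w hvw)
    convert h using 1 <;> funext ω <;> simp [hXdef, hGU, hGA, hGB]
  -- first moments
  have hEU : ∀ v, ∫ ω, U v ω ∂μ = p := fun v =>
    hE01 _ _ (hUm v) (hU01 v) hp.le (hUp v)
  have hEξ : ∀ v i, ∫ ω, ξ v i ω ∂μ = q₁ := fun v i =>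
    hE01 _ _ (hξm v i) (hξ01 v i) hq₁.le (hξq v i)
  have hEη : ∀ v j, ∫ ω, η v j ω ∂μ = q₂ := fun v j =>
    hE01 _ _ (hηm v j) (hη01 v j) hq₂.le (hηq v j)
  have hIntξ : ∀ v i, Integrable (ξ v i) μ := fun v i =>
    hint _ 1 (hξm v i) fun ω => by rcases hξ01 v i ω with h | h <;> simp [h]
  have hIntη : ∀ v j, Integrable (η v j) μ := fun v j =>
    hint _ 1 (hηm v j) fun ω => by rcases hη01 v j ω with h | h <;> simp [h]
  have hIntξξ : ∀ v i i', Integrable (fun ω => ξ v i ω * ξ v i' ω) μ := fun v i i' =>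
    hint _ 1 ((hξm v i).mul (hξm v i')) fun ω => by
      rcases hξ01 v i ω with h | h <;> rcases hξ01 v i' ω with h' | h' <;> simp [h, h']
  have hIntηη : ∀ v j j', Integrable (fun ω => η v j ω * η v j' ω) μ := fun v j j' =>
    hint _ 1 ((hηm v j).mul (hηm v j')) fun ω => by
      rcases hη01 v j ω with h | h <;> rcases hη01 v j' ω with h' | h' <;> simp [h, h']
  have hEA : ∀ v, ∫ ω, A v ω ∂μ = (a v : ℝ) * q₁ := by
    intro v
    have : ∀ ω, A v ω = ∑ i, ξ v i ω := fun ω => rfl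
    simp only [this]
    rw [integral_finset_sum _ fun i _ => hIntξ v i]
    simp [hEξ, Finset.sum_const, nsmul_eq_mul]
  have hEB : ∀ v, ∫ ω, B v ω ∂μ = (b v : ℝ) * q₂ := by
    intro v
    have : ∀ ω, B v ω = ∑ j, η v j ω := fun ω => rfl
    simp only [this]
    rw [integral_finset_sum _ fun j _ => hIntη v j]
    simp [hEη, Finset.sum_const, nsmul_eq_mul]
  -- pair moments
  have hEξξ : ∀ v (i i' : Fin (a v)), ∫ ω, ξ v i ω * ξ v i' ω ∂μ
      = if i = i' then q₁ else q₁ ^ 2 := by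
    intro v i i'
    by_cases h : i = i'
    · subst h
      rw [if_pos rfl]
      have : ∀ ω, ξ v i ω * ξ v i ω = ξ v i ω := fun ω => by
        rcases hξ01 v i ω with h | h <;> simp [h]
      simp only [this]
      exact hEξ v i
    · rw [if_neg h]
      have hne : (Sum.inr (Sum.inl ⟨v, i⟩) :
          ι ⊕ ((Σ v : ι, Fin (a v)) ⊕ (Σ v : ι, Fin (b v))))
          ≠ Sum.inr (Sum.inl ⟨v, i'⟩) := by simp [h]
      have hind : IndepFun (ξ v i) (ξ v i') μ := hIndep.indepFun hne
      have := hind.integral_fun_mul_eq_mul_integral (hξm v i).aestronglyMeasurable (hξm v i').aestronglyMeasurable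
      calc ∫ ω, ξ v i ω * ξ v i' ω ∂μ = (∫ ω, ξ v i ω ∂μ) * ∫ ω, ξ v i' ω ∂μ := this
        _ = q₁ ^ 2 := by rw [hEξ, hEξ, sq]
  have hEηη : ∀ v (j j' : Fin (b v)), ∫ ω, η v j ω * η v j' ω ∂μ
      = if j = j' then q₂ else q₂ ^ 2 := by
    intro v j j'
    by_cases h : j = j'
    · subst h
      rw [if_pos rfl]
      have : ∀ ω, η v j ω * η v j ω = η v j ω := fun ω => by
        rcases hη01 v j ω with h | h <;> simp [h]
      simp only [this]
      exact hEη v j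
    · rw [if_neg h]
      have hne : (Sum.inr (Sum.inr ⟨v, j⟩) :
          ι ⊕ ((Σ v : ι, Fin (a v)) ⊕ (Σ v : ι, Fin (b v))))
          ≠ Sum.inr (Sum.inr ⟨v, j'⟩) := by simp [h]
      have hind : IndepFun (η v j) (η v j') μ := hIndep.indepFun hne
      have := hind.integral_fun_mul_eq_mul_integral (hηm v j).aestronglyMeasurable (hηm v j').aestronglyMeasurable
      calc ∫ ω, η v j ω * η v j' ω ∂μ = (∫ ω, η v j ω ∂μ) * ∫ ω, η v j' ω ∂μ := this
        _ = q₂ ^ 2 := by rw [hEη, hEη, sq]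
  have hEA2 : ∀ v, ∫ ω, (A v ω) ^ 2 ∂μ
      = (a v : ℝ) * q₁ + ((a v : ℝ) ^ 2 - (a v : ℝ)) * q₁ ^ 2 := by
    intro v
    have hsq : ∀ ω, (A v ω) ^ 2 = ∑ i, ∑ i', ξ v i ω * ξ v i' ω := by
      intro ω; rw [sq]; exact Finset.sum_mul_sum _ _ _ _
    simp only [hsq]
    rw [integral_finset_sum _ fun i _ => integrable_finset_sum _ fun i' _ => hIntξξ v i i']
    rw [Finset.sum_congr rfl fun i _ => integral_finset_sum _ fun i' _ => hIntξξ v i i']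
    rw [Finset.sum_congr rfl fun i _ => Finset.sum_congr rfl fun i' _ => hEξξ v i i']
    exact sum_sum_ite_real (a v) q₁ (q₁ ^ 2)
  have hEB2 : ∀ v, ∫ ω, (B v ω) ^ 2 ∂μ
      = (b v : ℝ) * q₂ + ((b v : ℝ) ^ 2 - (b v : ℝ)) * q₂ ^ 2 := by
    intro v
    have hsq : ∀ ω, (B v ω) ^ 2 = ∑ j, ∑ j', η v j ω * η v j' ω := by
      intro ω; rw [sq]; exact Finset.sum_mul_sum _ _ _ _
    simp only [hsq]
    rw [integral_finset_sum _ fun j _ => integrable_finset_sum _ fun j' _ => hIntηη v j j']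
    rw [Finset.sum_congr rfl fun j _ => integral_finset_sum _ fun j' _ => hIntηη v j j']
    rw [Finset.sum_congr rfl fun j _ => Finset.sum_congr rfl fun j' _ => hEηη v j j']
    exact sum_sum_ite_real (b v) q₂ (q₂ ^ 2)
  -- moments of X
  have hEX : ∀ v, ∫ ω, X v ω ∂μ = p * ((a v : ℝ) * q₁) * ((b v : ℝ) * q₂) := by
    intro v
    have h1 : IndepFun (U v) (fun ω => A v ω * B v ω) μ := by
      simpa using hUABpow v 1 1
    have h2 : IndepFun (A v) (B v) μ := by
      simpa using hABpow v 1 1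
    have hX' : ∀ ω, X v ω = U v ω * (A v ω * B v ω) := fun ω => mul_assoc _ _ _
    simp only [hX']
    calc ∫ ω, U v ω * (A v ω * B v ω) ∂μ
        = (∫ ω, U v ω ∂μ) * ∫ ω, A v ω * B v ω ∂μ :=
          h1.integral_fun_mul_eq_mul_integral (hUm v).aestronglyMeasurable
            ((hAm v).mul (hBm v)).aestronglyMeasurable
      _ = (∫ ω, U v ω ∂μ) * ((∫ ω, A v ω ∂μ) * ∫ ω, B v ω ∂μ) := by
          congr 1
          exact h2.integral_fun_mul_eq_mul_integral (hAm v).aestronglyMeasurable (hBm v).aestronglyMeasurable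
      _ = p * ((a v : ℝ) * q₁) * ((b v : ℝ) * q₂) := by
          rw [hEU v, hEA v, hEB v]; ring
  have hEX2 : ∀ v, ∫ ω, (X v ω) ^ 2 ∂μ
      = p * ((a v : ℝ) * q₁ + ((a v : ℝ) ^ 2 - (a v : ℝ)) * q₁ ^ 2)
          * ((b v : ℝ) * q₂ + ((b v : ℝ) ^ 2 - (b v : ℝ)) * q₂ ^ 2) := by
    intro v
    have h1 : IndepFun (U v) (fun ω => A v ω ^ 2 * B v ω ^ 2) μ := hUABpow v 2 2
    have h2 : IndepFun (fun ω => A v ω ^ 2) (fun ω => B v ω ^ 2) μ := hABpow v 2 2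
    have hsq : ∀ ω, (X v ω) ^ 2 = U v ω * (A v ω ^ 2 * B v ω ^ 2) := by
      intro ω
      rcases hU01 v ω with h | h
      · show (U v ω * A v ω * B v ω) ^ 2 = _; rw [h]; ring
      · show (U v ω * A v ω * B v ω) ^ 2 = _; rw [h]; ring
    simp only [hsq]
    calc ∫ ω, U v ω * (A v ω ^ 2 * B v ω ^ 2) ∂μ
        = (∫ ω, U v ω ∂μ) * ∫ ω, A v ω ^ 2 * B v ω ^ 2 ∂μ :=
          h1.integral_fun_mul_eq_mul_integral (hUm v).aestronglyMeasurable
            (((hAm v).pow_const 2).mul ((hBm v).pow_const 2)).aestronglyMeasurable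
      _ = (∫ ω, U v ω ∂μ) * ((∫ ω, A v ω ^ 2 ∂μ) * ∫ ω, B v ω ^ 2 ∂μ) := by
          congr 1
          exact h2.integral_fun_mul_eq_mul_integral ((hAm v).pow_const 2).aestronglyMeasurable
            ((hBm v).pow_const 2).aestronglyMeasurable
      _ = _ := by rw [hEU v, hEA2 v, hEB2 v]; ring
  -- per-key variance
  have hvar : ∀ v, variance (X v) μ
      = p * ((a v : ℝ) * q₁ + ((a v : ℝ) ^ 2 - (a v : ℝ)) * q₁ ^ 2)
          * ((b v : ℝ) * q₂ + ((b v : ℝ) ^ 2 - (b v : ℝ)) * q₂ ^ 2)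
        - (p * ((a v : ℝ) * q₁) * ((b v : ℝ) * q₂)) ^ 2 := by
    intro v
    rw [variance_eq_sub (hXmem2 v)]
    simp only [Pi.pow_apply]
    rw [hEX2 v, hEX v]
  -- assemble
  have hZ : (fun ω => (1 / (p * q₁ * q₂)) *
      ∑ v, U v ω * (∑ i, ξ v i ω) * (∑ j, η v j ω))
      = fun ω => (1 / (p * q₁ * q₂)) * (∑ v, X v) ω := by
    funext ω
    simp [hXdef, hAdef, hBdef, Finset.sum_apply]
  rw [hZ, variance_const_mul,
    IndepFun.variance_sum (fun v _ => hXmem2 v) (fun v _ w _ hvw => hXX v w hvw),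
    Finset.mul_sum]
  have hRHS : (1 / p - 1) * (∑ v, (a v : ℝ) ^ 2 * (b v : ℝ) ^ 2)
        + (1 / ε₂ - 1 / p) * (∑ v, (a v : ℝ) ^ 2 * (b v : ℝ))
        + (1 / ε₁ - 1 / p) * (∑ v, (a v : ℝ) * (b v : ℝ) ^ 2)
        + (p / (ε₁ * ε₂) - 1 / ε₁ - 1 / ε₂ + 1 / p) * (∑ v, (a v : ℝ) * (b v : ℝ))
      = ∑ v, ((1 / p - 1) * ((a v : ℝ) ^ 2 * (b v : ℝ) ^ 2)
        + (1 / ε₂ - 1 / p) * ((a v : ℝ) ^ 2 * (b v : ℝ))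
        + (1 / ε₁ - 1 / p) * ((a v : ℝ) * (b v : ℝ) ^ 2)
        + (p / (ε₁ * ε₂) - 1 / ε₁ - 1 / ε₂ + 1 / p) * ((a v : ℝ) * (b v : ℝ))) := by
    rw [Finset.mul_sum, Finset.mul_sum, Finset.mul_sum, Finset.mul_sum,
      ← Finset.sum_add_distrib, ← Finset.sum_add_distrib, ← Finset.sum_add_distrib]
  rw [hRHS]
  refine Finset.sum_congr rfl fun v _ => ?_
  rw [hvar v, hq₁def, hq₂def]
  have hpne : p ≠ 0 := hp.ne'
  have h1ne : ε₁ ≠ 0 := hε₁.ne'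
  have h2ne : ε₂ ≠ 0 := hε₂.ne'
  field_simp
  ring
end

section
/- (Theorem: optimal centralized UBS parameters for COUNT.) Assume γ_{1,1} > 0. Let p* = min{ 1, max{ ε₁, ε₂, √( ε₁ε₂·(γ_{2,2} − γ_{1,2} − γ_{2,1} + γ_{1,1}) / γ_{1,1} ) } }. Then p* ∈ [max(ε₁,ε₂), 1] and for every p with max(ε₁, ε₂) ≤ p ≤ 1, V_count(p*) ≤ V_count(p); i.e., p* minimizes the count-estimator variance over all admissible universe sampling rates. -/
/-- Variance of the UBS count estimator in the centralized setting, as a function of the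
common universe sampling rate `p` (with uniform rates `ε₁ / p` and `ε₂ / p`). -/
noncomputable def Vcount {ι : Type*} [Fintype ι] (a b : ι → ℕ) (ε₁ ε₂ p : ℝ) : ℝ :=
  (1 / p - 1) * gammaMoment a b 2 2
    + (1 / ε₂ - 1 / p) * gammaMoment a b 2 1
    + (1 / ε₁ - 1 / p) * gammaMoment a b 1 2
    + (p / (ε₁ * ε₂) - 1 / ε₁ - 1 / ε₂ + 1 / p) * gammaMoment a b 1 1

/-- Minimizing `A/x + B*x` on `[m,1]` at the clamped square root. -/
lemma clamp_min_aux (A B m : ℝ) (hA : 0 ≤ A) (hB : 0 < B) (hm : 0 < m) (hm1 : m ≤ 1)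
    (p : ℝ) (hmp : m ≤ p) (hp1 : p ≤ 1) :
    A / (min 1 (max m (Real.sqrt (A / B)))) + B * (min 1 (max m (Real.sqrt (A / B))))
      ≤ A / p + B * p := by
  set s := Real.sqrt (A / B) with hs
  set q := min 1 (max m s) with hq
  have hs0 : 0 ≤ s := Real.sqrt_nonneg _
  have hs2 : s ^ 2 = A / B := Real.sq_sqrt (by positivity)
  have hq0 : 0 < q := lt_min (by norm_num) (lt_of_lt_of_le hm (le_max_left _ _))
  have hp0 : 0 < p := lt_of_lt_of_le hm hmp
  have key : (p - q) * (A - B * q * p) ≤ 0 := by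
    rcases le_total p q with h | h
    · rcases le_total m s with hms | hms
      · have hqs : q ≤ s := le_trans (min_le_right _ _) (le_of_eq (max_eq_right hms))
        have h1 : q * p ≤ s ^ 2 := by nlinarith
        have h2 : B * q * p ≤ A := by
          rw [hs2] at h1
          have := (le_div_iff₀ hB).mp h1
          nlinarith
        nlinarith
      · have hqm : q = m := by rw [hq, max_eq_left hms, min_eq_right hm1]
        have hpq : p = q := le_antisymm h (hqm ▸ hmp)
        simp [hpq]
    · rcases le_total s 1 with hs1 | hs1
      · have hsq : s ≤ q := le_min hs1 (le_max_right _ _)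
        have h1 : s ^ 2 ≤ q * p := by nlinarith
        have h2 : A ≤ B * q * p := by
          rw [hs2] at h1
          have := (div_le_iff₀ hB).mp h1
          nlinarith
        nlinarith
      · have hq1 : q = 1 := by
          rw [hq, min_eq_left (le_trans hs1 (le_max_right _ _))]
        have hpq : p = q := le_antisymm (hq1 ▸ hp1) h
        simp [hpq]
  have hdiff : A / q + B * q - (A / p + B * p) = (p - q) * (A - B * q * p) / (q * p) := by
    field_simp
    ring
  have : (p - q) * (A - B * q * p) / (q * p) ≤ 0 :=
    div_nonpos_of_nonpos_of_nonneg key (le_of_lt (mul_pos hq0 hp0))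
  linarith [hdiff ▸ this]

/-- **Optimal centralized UBS parameter for COUNT.**  Assuming `γ_{1,1} > 0`, the rate
`p* = min {1, max {ε₁, ε₂, √(ε₁ε₂ (γ₂₂ − γ₁₂ − γ₂₁ + γ₁₁) / γ₁₁)}}` lies in
`[max ε₁ ε₂, 1]` and minimizes the count-estimator variance over all admissible
universe sampling rates. -/
theorem optimal_centralized_count_rate
    {ι : Type*} [Fintype ι] (a b : ι → ℕ)
    (ε₁ ε₂ : ℝ) (hε₁0 : 0 < ε₁) (hε₁1 : ε₁ ≤ 1) (hε₂0 : 0 < ε₂) (hε₂1 : ε₂ ≤ 1)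
    (hγ : 0 < gammaMoment a b 1 1)
    (pstar : ℝ)
    (hpstar : pstar = min 1 (max ε₁ (max ε₂
      (Real.sqrt (ε₁ * ε₂ * (gammaMoment a b 2 2 - gammaMoment a b 1 2
        - gammaMoment a b 2 1 + gammaMoment a b 1 1) / gammaMoment a b 1 1))))) :
    pstar ∈ Set.Icc (max ε₁ ε₂) 1 ∧
      ∀ p ∈ Set.Icc (max ε₁ ε₂) 1, Vcount a b ε₁ ε₂ pstar ≤ Vcount a b ε₁ ε₂ p := by
  set g22 := gammaMoment a b 2 2 with hg22
  set g21 := gammaMoment a b 2 1 with hg21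
  set g12 := gammaMoment a b 1 2 with hg12
  set g11 := gammaMoment a b 1 1 with hg11
  set A := g22 - g12 - g21 + g11 with hA_def
  set B := g11 / (ε₁ * ε₂) with hB_def
  have hm0 : 0 < max ε₁ ε₂ := lt_max_of_lt_left hε₁0
  have hm1 : max ε₁ ε₂ ≤ 1 := max_le hε₁1 hε₂1
  have hA : 0 ≤ A := by
    have : A = ∑ v, ((a v : ℝ) ^ 2 - a v) * ((b v : ℝ) ^ 2 - b v) := by
      rw [hA_def, hg22, hg12, hg21, hg11]
      unfold gammaMoment
      rw [← Finset.sum_sub_distrib, ← Finset.sum_sub_distrib, ← Finset.sum_add_distrib]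
      apply Finset.sum_congr rfl
      intro v _
      ring
    rw [this]
    apply Finset.sum_nonneg
    intro v _
    have ha : (a v : ℝ) = 0 ∨ 1 ≤ (a v : ℝ) := by
      rcases Nat.eq_zero_or_pos (a v) with h | h
      · left; exact_mod_cast h
      · right; exact_mod_cast h
    have hb : (b v : ℝ) = 0 ∨ 1 ≤ (b v : ℝ) := by
      rcases Nat.eq_zero_or_pos (b v) with h | h
      · left; exact_mod_cast h
      · right; exact_mod_cast h
    have ha' : 0 ≤ (a v : ℝ) ^ 2 - a v := by
      rcases ha with h | h
      · simp [h]
      · nlinarith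
    have hb' : 0 ≤ (b v : ℝ) ^ 2 - b v := by
      rcases hb with h | h
      · simp [h]
      · nlinarith
    exact mul_nonneg ha' hb'
  have hB : 0 < B := div_pos hγ (mul_pos hε₁0 hε₂0)
  have hsarg : ε₁ * ε₂ * A / g11 = A / B := by
    rw [hB_def]
    field_simp
  have hpstar' : pstar = min 1 (max (max ε₁ ε₂) (Real.sqrt (A / B))) := by
    rw [hpstar, ← hsarg, max_assoc]
  have expand : ∀ x : ℝ, Vcount a b ε₁ ε₂ x
      = A * (1 / x) + B * x
        + (-g22 + (1 / ε₂) * g21 + (1 / ε₁) * g12 + (-(1 / ε₁) - 1 / ε₂) * g11) := by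
    intro x
    unfold Vcount
    rw [← hg22, ← hg21, ← hg12, ← hg11, hA_def, hB_def]
    ring
  have hmem : pstar ∈ Set.Icc (max ε₁ ε₂) 1 := by
    constructor
    · rw [hpstar']
      exact le_min hm1 (le_max_left _ _)
    · rw [hpstar']
      exact min_le_left _ _
  refine ⟨hmem, ?_⟩
  intro p hp
  have hp0 : 0 < p := lt_of_lt_of_le hm0 hp.1
  have hq0 : 0 < pstar := lt_of_lt_of_le hm0 hmem.1
  rw [expand p, expand pstar]
  have := clamp_min_aux A B (max ε₁ ε₂) hA hB hm0 hm1 p hp.1 hp.2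
  rw [← hpstar'] at this
  have e1 : A / pstar = A * (1 / pstar) := by ring
  have e2 : A / p = A * (1 / p) := by ring
  linarith [this, e1 ▸ e2 ▸ this]
end

section
/- (Lemma: worst-case frequency vector for COUNT in the decentralized setting.) Fix a : ι → ℕ with ι finite and nonempty, ε₁, ε₂ ∈ (0,1], a real n_b > 0, and p with max(ε₁, ε₂) ≤ p ≤ 1. Let a_* = max_{v∈ι} a_v. Then over all real vectors b : ι → ℝ with b_v ≥ 0 for all v and Σ_v b_v = n_b, the quantity V_count(p; a, b) = (1/p − 1)·Σ_v a_v² b_v² + (1/ε₂ − 1/p)·Σ_v a_v² b_v + (1/ε₁ − 1/p)·Σ_v a_v b_v² + (p/(ε₁ε₂) − 1/ε₁ − 1/ε₂ + 1/p)·Σ_v a_v b_v attains its maximum value, equal to (1/p − 1)·a_*²·n_b² + (1/ε₂ − 1/p)·a_*²·n_b + (1/ε₁ − 1/p)·a_*·n_b² + (p/(ε₁ε₂) − 1/ε₁ − 1/ε₂ + 1/p)·a_*·n_b, at the vector concentrating all mass on a key v_* with a_{v_*} = a_* (i.e., b_{v_*} = n_b and b_v = 0 for v ≠ v_*). -/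
open Finset

/-- Variance of the UBS count estimator with universe rate `p` and uniform rates
`ε₁ / p`, `ε₂ / p`, viewed as a function of a real-valued frequency vector `b` of the
second table (the first table has frequency vector `a`). -/
noncomputable def VcountR {ι : Type*} [Fintype ι] (a : ι → ℕ) (b : ι → ℝ) (ε₁ ε₂ p : ℝ) : ℝ :=
  (1 / p - 1) * (∑ v, (a v : ℝ) ^ 2 * (b v) ^ 2)
    + (1 / ε₂ - 1 / p) * (∑ v, (a v : ℝ) ^ 2 * b v)
    + (1 / ε₁ - 1 / p) * (∑ v, (a v : ℝ) * (b v) ^ 2)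
    + (p / (ε₁ * ε₂) - 1 / ε₁ - 1 / ε₂ + 1 / p) * (∑ v, (a v : ℝ) * b v)

/-- **Worst-case frequency vector for COUNT in the decentralized setting.**
Over all nonnegative real frequency vectors `b` with total mass `n_b`, the count-estimator
variance is maximized (with maximum value as displayed) by concentrating all mass on a key
`v⋆` whose frequency in the first table is maximal, `a v⋆ = a_* = max_v a_v`. -/
theorem worst_case_frequency_vector_for_count
    {ι : Type*} [Fintype ι] [Nonempty ι] [DecidableEq ι] (a : ι → ℕ)
    (ε₁ ε₂ : ℝ) (hε₁0 : 0 < ε₁) (hε₁1 : ε₁ ≤ 1) (hε₂0 : 0 < ε₂) (hε₂1 : ε₂ ≤ 1)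
    (nb : ℝ) (hnb : 0 < nb)
    (p : ℝ) (hplb : max ε₁ ε₂ ≤ p) (hp1 : p ≤ 1)
    (astar : ℕ) (hastar : astar = univ.sup a) :
    (∀ b : ι → ℝ, (∀ v, 0 ≤ b v) → ∑ v, b v = nb →
        VcountR a b ε₁ ε₂ p ≤
          (1 / p - 1) * (astar : ℝ) ^ 2 * nb ^ 2
            + (1 / ε₂ - 1 / p) * (astar : ℝ) ^ 2 * nb
            + (1 / ε₁ - 1 / p) * (astar : ℝ) * nb ^ 2
            + (p / (ε₁ * ε₂) - 1 / ε₁ - 1 / ε₂ + 1 / p) * (astar : ℝ) * nb) ∧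
    (∀ vstar : ι, a vstar = astar →
        VcountR a (fun v => if v = vstar then nb else 0) ε₁ ε₂ p =
          (1 / p - 1) * (astar : ℝ) ^ 2 * nb ^ 2
            + (1 / ε₂ - 1 / p) * (astar : ℝ) ^ 2 * nb
            + (1 / ε₁ - 1 / p) * (astar : ℝ) * nb ^ 2
            + (p / (ε₁ * ε₂) - 1 / ε₁ - 1 / ε₂ + 1 / p) * (astar : ℝ) * nb) := by
  have hε₁p : ε₁ ≤ p := le_trans (le_max_left _ _) hplb
  have hε₂p : ε₂ ≤ p := le_trans (le_max_right _ _) hplb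
  have hp0 : 0 < p := lt_of_lt_of_le hε₁0 hε₁p
  have hA : 0 ≤ 1 / p - 1 := by
    have := one_le_one_div hp0 hp1; linarith
  have hC2 : 0 ≤ 1 / ε₂ - 1 / p := by
    have := one_div_le_one_div_of_le hε₂0 hε₂p; linarith
  have hC1 : 0 ≤ 1 / ε₁ - 1 / p := by
    have := one_div_le_one_div_of_le hε₁0 hε₁p; linarith
  have hD : 0 ≤ p / (ε₁ * ε₂) - 1 / ε₁ - 1 / ε₂ + 1 / p := by
    have heq : p / (ε₁ * ε₂) - 1 / ε₁ - 1 / ε₂ + 1 / p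
        = (p - ε₁) * (p - ε₂) / (ε₁ * ε₂ * p) := by
      field_simp; ring
    rw [heq]
    apply div_nonneg (mul_nonneg (by linarith) (by linarith))
    positivity
  have ha_le : ∀ v : ι, (a v : ℝ) ≤ (astar : ℝ) := fun v => by
    exact_mod_cast Nat.cast_le.mpr (hastar ▸ Finset.le_sup (Finset.mem_univ v))
  have ha0 : ∀ v : ι, (0:ℝ) ≤ (a v : ℝ) := fun v => Nat.cast_nonneg _
  have hastar0 : (0:ℝ) ≤ (astar : ℝ) := Nat.cast_nonneg _
  constructor
  · intro b hb hsum
    have hble : ∀ v, b v ≤ nb := fun v => by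
      rw [← hsum]; exact Finset.single_le_sum (fun i _ => hb i) (Finset.mem_univ v)
    have h1 : ∑ v, (a v : ℝ) ^ 2 * (b v) ^ 2 ≤ (astar : ℝ) ^ 2 * nb ^ 2 := by
      calc ∑ v, (a v : ℝ) ^ 2 * (b v) ^ 2
          ≤ ∑ v, (astar : ℝ) ^ 2 * nb * b v := by
            apply Finset.sum_le_sum; intro v _
            have h := mul_le_mul (pow_le_pow_left₀ (ha0 v) (ha_le v) 2)
              (mul_le_mul (hble v) le_rfl (hb v) (le_of_lt hnb))
              (mul_nonneg (hb v) (hb v)) (by positivity)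
            calc (a v : ℝ) ^ 2 * (b v) ^ 2 = (a v : ℝ)^2 * (b v * b v) := by ring
              _ ≤ (astar:ℝ)^2 * (nb * b v) := h
              _ = (astar:ℝ)^2 * nb * b v := by ring
        _ = (astar : ℝ) ^ 2 * nb ^ 2 := by
            rw [← Finset.mul_sum, hsum]; ring
    have h2 : ∑ v, (a v : ℝ) ^ 2 * b v ≤ (astar : ℝ) ^ 2 * nb := by
      calc ∑ v, (a v : ℝ) ^ 2 * b v ≤ ∑ v, (astar : ℝ) ^ 2 * b v := by
            apply Finset.sum_le_sum; intro v _
            exact mul_le_mul_of_nonneg_right (pow_le_pow_left₀ (ha0 v) (ha_le v) 2) (hb v)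
        _ = (astar : ℝ) ^ 2 * nb := by rw [← Finset.mul_sum, hsum]
    have h3 : ∑ v, (a v : ℝ) * (b v) ^ 2 ≤ (astar : ℝ) * nb ^ 2 := by
      calc ∑ v, (a v : ℝ) * (b v) ^ 2 ≤ ∑ v, (astar : ℝ) * nb * b v := by
            apply Finset.sum_le_sum; intro v _
            have h := mul_le_mul (ha_le v)
              (mul_le_mul (hble v) le_rfl (hb v) (le_of_lt hnb))
              (mul_nonneg (hb v) (hb v)) hastar0
            calc (a v : ℝ) * (b v) ^ 2 = (a v : ℝ) * (b v * b v) := by ring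
              _ ≤ (astar:ℝ) * (nb * b v) := h
              _ = (astar:ℝ) * nb * b v := by ring
        _ = (astar : ℝ) * nb ^ 2 := by rw [← Finset.mul_sum, hsum]; ring
    have h4 : ∑ v, (a v : ℝ) * b v ≤ (astar : ℝ) * nb := by
      calc ∑ v, (a v : ℝ) * b v ≤ ∑ v, (astar : ℝ) * b v := by
            apply Finset.sum_le_sum; intro v _
            exact mul_le_mul_of_nonneg_right (ha_le v) (hb v)
        _ = (astar : ℝ) * nb := by rw [← Finset.mul_sum, hsum]
    unfold VcountR
    have := mul_le_mul_of_nonneg_left h1 hA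
    have := mul_le_mul_of_nonneg_left h2 hC2
    have := mul_le_mul_of_nonneg_left h3 hC1
    have := mul_le_mul_of_nonneg_left h4 hD
    nlinarith
  · intro vstar hv
    unfold VcountR
    have e1 : ∑ v, (a v : ℝ) ^ 2 * (if v = vstar then nb else 0) ^ 2
        = (astar : ℝ) ^ 2 * nb ^ 2 := by
      rw [Finset.sum_eq_single vstar]
      · simp [hv]
      · intro v _ hne; simp [hne]
      · intro h; exact absurd (Finset.mem_univ vstar) h
    have e2 : ∑ v, (a v : ℝ) ^ 2 * (if v = vstar then nb else 0)
        = (astar : ℝ) ^ 2 * nb := by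
      rw [Finset.sum_eq_single vstar]
      · simp [hv]
      · intro v _ hne; simp [hne]
      · intro h; exact absurd (Finset.mem_univ vstar) h
    have e3 : ∑ v, (a v : ℝ) * (if v = vstar then nb else 0) ^ 2
        = (astar : ℝ) * nb ^ 2 := by
      rw [Finset.sum_eq_single vstar]
      · simp [hv]
      · intro v _ hne; simp [hne]
      · intro h; exact absurd (Finset.mem_univ vstar) h
    have e4 : ∑ v, (a v : ℝ) * (if v = vstar then nb else 0)
        = (astar : ℝ) * nb := by
      rw [Finset.sum_eq_single vstar]
      · simp [hv]
      · intro v _ hne; simp [hne]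
      · intro h; exact absurd (Finset.mem_univ vstar) h
    simp only [e1, e2, e3, e4]
    ring
end

section
/- (Theorem: optimal decentralized UBS parameter for COUNT with known maximum frequencies.) Let ι be a finite nonempty index type, F_a, F_b positive naturals, and ε₁, ε₂ ∈ (0,1]. For p ∈ (0,1] define the worst-case variance W(p) = |ι|·( (1/p − 1)·F_a²F_b² + (1/ε₂ − 1/p)·F_a²F_b + (1/ε₁ − 1/p)·F_aF_b² + (p/(ε₁ε₂) − 1/ε₁ − 1/ε₂ + 1/p)·F_aF_b ). Then: (i) for every p with max(ε₁,ε₂) ≤ p ≤ 1 and every pair of frequency vectors a, b : ι → ℕ with a_v ≤ F_a and b_v ≤ F_b for all v, V_count(p; a, b) ≤ W(p); and (ii) the point p† = min{ 1, max{ ε₁, ε₂, √( ε₁ε₂·(F_aF_b − F_a − F_b + 1) ) } } satisfies W(p†) ≤ W(p) for all p ∈ [max(ε₁,ε₂), 1]. -/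
set_option maxHeartbeats 1000000


/-- Variance of the UBS count estimator with universe rate `p` and uniform rates
`ε₁ / p`, `ε₂ / p`, as a function of the two frequency vectors `a`, `b`. -/
noncomputable def VcountN {ι : Type*} [Fintype ι] (a b : ι → ℕ) (ε₁ ε₂ p : ℝ) : ℝ :=
  (1 / p - 1) * (∑ v, (a v : ℝ) ^ 2 * (b v : ℝ) ^ 2)
    + (1 / ε₂ - 1 / p) * (∑ v, (a v : ℝ) ^ 2 * (b v : ℝ))
    + (1 / ε₁ - 1 / p) * (∑ v, (a v : ℝ) * (b v : ℝ) ^ 2)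
    + (p / (ε₁ * ε₂) - 1 / ε₁ - 1 / ε₂ + 1 / p) * (∑ v, (a v : ℝ) * (b v : ℝ))

/-- Worst-case count-estimator variance when all key frequencies are at their maxima
`F_a` and `F_b`. -/
noncomputable def Wworst (ι : Type*) [Fintype ι] (Fa Fb : ℕ) (ε₁ ε₂ p : ℝ) : ℝ :=
  (Fintype.card ι : ℝ) *
    ((1 / p - 1) * (Fa : ℝ) ^ 2 * (Fb : ℝ) ^ 2
      + (1 / ε₂ - 1 / p) * (Fa : ℝ) ^ 2 * (Fb : ℝ)
      + (1 / ε₁ - 1 / p) * (Fa : ℝ) * (Fb : ℝ) ^ 2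
      + (p / (ε₁ * ε₂) - 1 / ε₁ - 1 / ε₂ + 1 / p) * (Fa : ℝ) * (Fb : ℝ))


lemma key_convex (C D x y : ℝ) (hx : 0 < x) (hy : 0 < y)
    (h : (x - y) * (D * (x * y) - C) ≤ 0) :
    C / x + D * x ≤ C / y + D * y := by
  have heq : C / y + D * y - (C / x + D * x)
      = ((y - x) * (D * (x * y) - C)) / (x * y) := by
    field_simp
    ring
  have h2 : 0 ≤ ((y - x) * (D * (x * y) - C)) / (x * y) :=
    div_nonneg (by nlinarith) (by positivity)
  linarith [heq ▸ h2]

/-- **Optimal decentralized UBS parameter for COUNT with known maximum frequencies.**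
(i) `W(p)` upper-bounds the count variance for all frequency vectors bounded by `F_a`, `F_b`;
(ii) `p† = min {1, max {ε₁, ε₂, √(ε₁ε₂ (F_aF_b − F_a − F_b + 1))}}` minimizes `W`
over `[max ε₁ ε₂, 1]`. -/
theorem optimal_decentralized_count_rate
    {ι : Type*} [Fintype ι] [Nonempty ι]
    (Fa Fb : ℕ) (hFa : 0 < Fa) (hFb : 0 < Fb)
    (ε₁ ε₂ : ℝ) (hε₁0 : 0 < ε₁) (hε₁1 : ε₁ ≤ 1) (hε₂0 : 0 < ε₂) (hε₂1 : ε₂ ≤ 1)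
    (pdag : ℝ)
    (hpdag : pdag = min 1 (max ε₁ (max ε₂
      (Real.sqrt (ε₁ * ε₂ * ((Fa : ℝ) * (Fb : ℝ) - (Fa : ℝ) - (Fb : ℝ) + 1)))))) :
    (∀ p ∈ Set.Icc (max ε₁ ε₂) 1, ∀ a b : ι → ℕ,
        (∀ v, a v ≤ Fa) → (∀ v, b v ≤ Fb) →
          VcountN a b ε₁ ε₂ p ≤ Wworst ι Fa Fb ε₁ ε₂ p) ∧
    (∀ p ∈ Set.Icc (max ε₁ ε₂) 1,
        Wworst ι Fa Fb ε₁ ε₂ pdag ≤ Wworst ι Fa Fb ε₁ ε₂ p) := by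
  set A : ℝ := (Fa : ℝ) with hA
  set B : ℝ := (Fb : ℝ) with hB
  have hA1 : (1 : ℝ) ≤ A := by rw [hA]; exact_mod_cast hFa
  have hB1 : (1 : ℝ) ≤ B := by rw [hB]; exact_mod_cast hFb
  have hA0 : (0 : ℝ) < A := by linarith
  have hB0 : (0 : ℝ) < B := by linarith
  constructor
  · rintro p ⟨hpl, hpu⟩ a b ha hb
    have hp0 : 0 < p := lt_of_lt_of_le hε₁0 (le_trans (le_max_left _ _) hpl)
    have hε₁p : ε₁ ≤ p := le_trans (le_max_left _ _) hpl
    have hε₂p : ε₂ ≤ p := le_trans (le_max_right _ _) hpl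
    have hc1 : 0 ≤ 1 / p - 1 := by
      rw [sub_nonneg]
      exact one_le_one_div hp0 hpu
    have hc2 : 0 ≤ 1 / ε₂ - 1 / p := by
      have := one_div_le_one_div_of_le hε₂0 hε₂p
      linarith
    have hc3 : 0 ≤ 1 / ε₁ - 1 / p := by
      have := one_div_le_one_div_of_le hε₁0 hε₁p
      linarith
    have hc4 : 0 ≤ p / (ε₁ * ε₂) - 1 / ε₁ - 1 / ε₂ + 1 / p := by
      have heq : p / (ε₁ * ε₂) - 1 / ε₁ - 1 / ε₂ + 1 / p
          = (p - ε₁) * (p - ε₂) / (p * ε₁ * ε₂) := by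
        field_simp; ring
      rw [heq]
      apply div_nonneg (mul_nonneg (by linarith) (by linarith)) (by positivity)
    have hav : ∀ v, (a v : ℝ) ≤ A := fun v => by rw [hA]; exact_mod_cast ha v
    have hbv : ∀ v, (b v : ℝ) ≤ B := fun v => by rw [hB]; exact_mod_cast hb v
    have hav0 : ∀ v, (0:ℝ) ≤ (a v : ℝ) := fun v => Nat.cast_nonneg _
    have hbv0 : ∀ v, (0:ℝ) ≤ (b v : ℝ) := fun v => Nat.cast_nonneg _
    have card_eq : ((Fintype.card ι : ℝ)) = ∑ _v : ι, (1:ℝ) := by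
      simp
    have h1 : (∑ v, (a v : ℝ) ^ 2 * (b v : ℝ) ^ 2) ≤ (Fintype.card ι : ℝ) * (A ^ 2 * B ^ 2) := by
      rw [card_eq, Finset.sum_mul]
      apply Finset.sum_le_sum
      intro v _
      rw [one_mul]
      gcongr <;> first | exact hav0 v | exact hbv0 v | exact hav v | exact hbv v
    have h2 : (∑ v, (a v : ℝ) ^ 2 * (b v : ℝ)) ≤ (Fintype.card ι : ℝ) * (A ^ 2 * B) := by
      rw [card_eq, Finset.sum_mul]
      apply Finset.sum_le_sum
      intro v _
      rw [one_mul]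
      gcongr <;> first | exact hav0 v | exact hbv0 v | exact hav v | exact hbv v
    have h3 : (∑ v, (a v : ℝ) * (b v : ℝ) ^ 2) ≤ (Fintype.card ι : ℝ) * (A * B ^ 2) := by
      rw [card_eq, Finset.sum_mul]
      apply Finset.sum_le_sum
      intro v _
      rw [one_mul]
      gcongr <;> first | exact hav0 v | exact hbv0 v | exact hav v | exact hbv v
    have h4 : (∑ v, (a v : ℝ) * (b v : ℝ)) ≤ (Fintype.card ι : ℝ) * (A * B) := by
      rw [card_eq, Finset.sum_mul]
      apply Finset.sum_le_sum
      intro v _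
      rw [one_mul]
      gcongr <;> first | exact hav0 v | exact hbv0 v | exact hav v | exact hbv v
    have hWeq : Wworst ι Fa Fb ε₁ ε₂ p
        = (1 / p - 1) * ((Fintype.card ι : ℝ) * (A ^ 2 * B ^ 2))
          + (1 / ε₂ - 1 / p) * ((Fintype.card ι : ℝ) * (A ^ 2 * B))
          + (1 / ε₁ - 1 / p) * ((Fintype.card ι : ℝ) * (A * B ^ 2))
          + (p / (ε₁ * ε₂) - 1 / ε₁ - 1 / ε₂ + 1 / p) * ((Fintype.card ι : ℝ) * (A * B)) := by
      unfold Wworst; ring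
    rw [hWeq]
    unfold VcountN
    gcongr
  · rintro p ⟨hpl, hpu⟩
    have hp0 : 0 < p := lt_of_lt_of_le hε₁0 (le_trans (le_max_left _ _) hpl)
    set s : ℝ := Real.sqrt (ε₁ * ε₂ * (A * B - A - B + 1)) with hs
    have harg : 0 ≤ ε₁ * ε₂ * (A * B - A - B + 1) := by
      have h0 : (0:ℝ) ≤ (A - 1) * (B - 1) := mul_nonneg (by linarith) (by linarith)
      nlinarith [mul_nonneg (mul_nonneg hε₁0.le hε₂0.le) h0]
    have hs0 : 0 ≤ s := Real.sqrt_nonneg _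
    have hs2 : s ^ 2 = ε₁ * ε₂ * (A * B - A - B + 1) := Real.sq_sqrt harg
    have hpdag' : pdag = min 1 (max (max ε₁ ε₂) s) := by
      rw [hpdag, max_assoc]
    have hM1 : max ε₁ ε₂ ≤ 1 := max_le hε₁1 hε₂1
    have hpdl : max ε₁ ε₂ ≤ pdag := by
      rw [hpdag']
      exact le_min hM1 (le_max_left _ _)
    have hpdu : pdag ≤ 1 := by rw [hpdag']; exact min_le_left _ _
    have hpd0 : 0 < pdag := lt_of_lt_of_le hε₁0 (le_trans (le_max_left _ _) hpdl)
    -- the key sign condition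
    have hsign : (pdag - p) * (pdag * p - s ^ 2) ≤ 0 := by
      rcases le_total s (max ε₁ ε₂) with hc | hc
      · have hpd : pdag = max ε₁ ε₂ := by
          rw [hpdag', max_eq_left hc, min_eq_right hM1]
        have h1 : pdag ≤ p := hpd ▸ hpl
        have h2 : s ≤ pdag := hpd ▸ hc
        have h3 : s ≤ p := le_trans h2 h1
        have h4 : s * s ≤ pdag * p := mul_le_mul h2 h3 hs0 hpd0.le
        have h5 : 0 ≤ (p - pdag) * (pdag * p - s ^ 2) :=
          mul_nonneg (by linarith) (by nlinarith)
        nlinarith [h5]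
      · rcases le_total s 1 with hc1 | hc1
        · have hpd : pdag = s := by
            rw [hpdag', max_eq_right hc, min_eq_right hc1]
          rw [hpd]
          nlinarith [sq_nonneg (p - s)]
        · have hpd : pdag = 1 := by
            rw [hpdag', max_eq_right hc, min_eq_left hc1]
          rw [hpd]
          have hsq : (1:ℝ) ≤ s ^ 2 := by nlinarith [sq_nonneg (s - 1)]
          have h5 : 0 ≤ (1 - p) * (s ^ 2 - p) :=
            mul_nonneg (by linarith) (by linarith)
          nlinarith [h5]
    -- rewrite Wworst in C/p + D p + E form
    have hWform : ∀ q : ℝ, 0 < q → Wworst ι Fa Fb ε₁ ε₂ q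
        = (Fintype.card ι : ℝ) *
            ((A * B * (A * B - A - B + 1)) / q + (A * B / (ε₁ * ε₂)) * q
              + (- A ^ 2 * B ^ 2 + A ^ 2 * B / ε₂ + A * B ^ 2 / ε₁ - A * B / ε₁ - A * B / ε₂)) := by
      intro q hq
      unfold Wworst
      field_simp
      ring
    rw [hWform pdag hpd0, hWform p hp0]
    have hcard : (0:ℝ) ≤ (Fintype.card ι : ℝ) := Nat.cast_nonneg _
    apply mul_le_mul_of_nonneg_left _ hcard
    have hkey := key_convex (A * B * (A * B - A - B + 1)) (A * B / (ε₁ * ε₂)) pdag p hpd0 hp0 ?_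
    · linarith
    · have hpos : 0 < A * B / (ε₁ * ε₂) := by positivity
      have hDC : A * B / (ε₁ * ε₂) * (pdag * p) - A * B * (A * B - A - B + 1)
          = (A * B / (ε₁ * ε₂)) * (pdag * p - s ^ 2) := by
        rw [hs2]; field_simp
      rw [hDC]
      calc (pdag - p) * (A * B / (ε₁ * ε₂) * (pdag * p - s ^ 2))
          = (A * B / (ε₁ * ε₂)) * ((pdag - p) * (pdag * p - s ^ 2)) := by ring
        _ ≤ 0 := mul_nonpos_of_nonneg_of_nonpos (le_of_lt hpos) hsign
end

section
/- (Lemma: variance of the sum estimator.) In the UBS sum sampling model, Var(Ĵ_sum) = ((1−q₂)/(p q₂))·β₁ + ((1−q₁)/(p q₁))·β₂ + ((1−q₁)(1−q₂)/(p q₁ q₂))·β₃ + ((1−p)/p)·β₄, where β₁ = Σ_v (a v)² μ_v² (b v), β₂ = Σ_v (a v)(μ_v² + σ_v²)(b v)², β₃ = Σ_v (a v)(μ_v² + σ_v²)(b v), and β₄ = Σ_v (a v)² μ_v² (b v)². -/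
open scoped ENNReal

open MeasureTheory ProbabilityTheory

/-- Mean `μ_v` of the weights attached to the tuples of the first table with join key `v`
(`0` when there are no such tuples). -/
noncomputable def wMean {ι : Type*} (a : ι → ℕ) (w : (v : ι) → Fin (a v) → ℝ) (v : ι) : ℝ :=
  (∑ i, w v i) / (a v)

/-- Population variance `σ_v²` of the weights attached to the tuples of the first table with
join key `v` (`0` when there are no such tuples). -/
noncomputable def wVar {ι : Type*} (a : ι → ℕ) (w : (v : ι) → Fin (a v) → ℝ) (v : ι) : ℝ :=
  (∑ i, (w v i - wMean a w v) ^ 2) / (a v)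

section Helpers

variable {Ω : Type*} [MeasurableSpace Ω] {μ : Measure Ω}

lemma abs_le_one_of_01 {x : ℝ} (h : x = 0 ∨ x = 1) : |x| ≤ 1 := by
  rcases h with rfl | rfl <;> norm_num

lemma memℒp_of_abs_le [IsFiniteMeasure μ] {g : Ω → ℝ} {C : ℝ} (hg : Measurable g)
    (hC : ∀ ω, |g ω| ≤ C) (r : ℝ≥0∞) : MemLp g r μ :=
  memLp_of_bounded (Filter.Eventually.of_forall fun ω => Set.mem_Icc.2 (abs_le.mp (hC ω)))
    hg.aestronglyMeasurable r

lemma integrable_of_abs_le [IsFiniteMeasure μ] {g : Ω → ℝ} {C : ℝ} (hg : Measurable g)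
    (hC : ∀ ω, |g ω| ≤ C) : Integrable g μ :=
  (memℒp_of_abs_le hg hC 1).integrable le_rfl

lemma bernoulli_integral [IsProbabilityMeasure μ] {X : Ω → ℝ} (hm : Measurable X)
    (h01 : ∀ ω, X ω = 0 ∨ X ω = 1) {r : ℝ} (hr : 0 ≤ r)
    (hP : μ {ω | X ω = 1} = ENNReal.ofReal r) : ∫ ω, X ω ∂μ = r := by
  have hs : MeasurableSet {ω | X ω = 1} := hm (measurableSet_singleton 1)
  have hXi : X = Set.indicator {ω | X ω = 1} (fun _ => (1:ℝ)) := by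
    funext ω
    by_cases h : X ω = 1
    · exact h.trans (Set.indicator_of_mem (show ω ∈ {ω | X ω = 1} from h) (fun _ => (1:ℝ))).symm
    · rcases h01 ω with h0 | h1
      · exact h0.trans (Set.indicator_of_notMem (show ω ∉ {ω | X ω = 1} from h) (fun _ => (1:ℝ))).symm
      · exact absurd h1 h
  rw [hXi, integral_indicator hs]
  simp [measureReal_def, hP, ENNReal.toReal_ofReal hr]

end Helpers

section WHelpers

lemma card_mul_wMean {ι : Type*} (a : ι → ℕ) (w : (v : ι) → Fin (a v) → ℝ) (v : ι) :
    (a v : ℝ) * wMean a w v = ∑ i, w v i := by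
  by_cases h : a v = 0
  · haveI : IsEmpty (Fin (a v)) := by rw [h]; infer_instance
    simp [h]
  · have ha : (a v : ℝ) ≠ 0 := Nat.cast_ne_zero.mpr h
    rw [wMean]
    field_simp

lemma card_mul_meanSq {ι : Type*} (a : ι → ℕ) (w : (v : ι) → Fin (a v) → ℝ) (v : ι) :
    (a v : ℝ) * ((wMean a w v) ^ 2 + wVar a w v) = ∑ i, (w v i) ^ 2 := by
  by_cases h : a v = 0
  · haveI : IsEmpty (Fin (a v)) := by rw [h]; infer_instance
    simp [h, wVar]
  · have ha : (a v : ℝ) ≠ 0 := Nat.cast_ne_zero.mpr h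
    have hsum : ∑ i, (w v i - wMean a w v) ^ 2
        = ∑ i, (w v i) ^ 2 - 2 * wMean a w v * (∑ i, w v i)
          + (a v : ℝ) * (wMean a w v) ^ 2 := by
      have he : ∀ i ∈ Finset.univ, (w v i - wMean a w v) ^ 2
          = ((w v i) ^ 2 + (wMean a w v) ^ 2) - 2 * wMean a w v * w v i := fun i _ => by ring
      rw [Finset.sum_congr rfl he, Finset.sum_sub_distrib, Finset.sum_add_distrib,
        ← Finset.mul_sum, Finset.sum_const, Finset.card_univ, Fintype.card_fin, nsmul_eq_mul]
      ring
    have hSw : ∑ i, w v i = (a v : ℝ) * wMean a w v := (card_mul_wMean a w v).symm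
    rw [wVar, hsum, hSw]
    field_simp
    ring

end WHelpers

/-- Index type for the UBS family of independent Bernoulli variables. -/
abbrev UBSIdx (ι : Type*) (a b : ι → ℕ) : Type _ :=
  ι ⊕ ((Σ v : ι, Fin (a v)) ⊕ (Σ v : ι, Fin (b v)))

set_option maxHeartbeats 2000000 in
/-- **Variance of the UBS sum estimator.**  In the UBS sum sampling model,
`Var(Ĵ_sum) = ((1−q₂)/(p q₂))·β₁ + ((1−q₁)/(p q₁))·β₂ + ((1−q₁)(1−q₂)/(p q₁ q₂))·β₃
+ ((1−p)/p)·β₄`, where `β₁ = ∑ a_v² μ_v² b_v`, `β₂ = ∑ a_v (μ_v² + σ_v²) b_v²`,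
`β₃ = ∑ a_v (μ_v² + σ_v²) b_v` and `β₄ = ∑ a_v² μ_v² b_v²`. -/
theorem sum_estimator_variance
    {Ω : Type*} [MeasurableSpace Ω] (μ : Measure Ω) [IsProbabilityMeasure μ]
    {ι : Type*} [Fintype ι]
    (a b : ι → ℕ) (w : (v : ι) → Fin (a v) → ℝ) (p q₁ q₂ : ℝ)
    (hp : 0 < p) (hp1 : p ≤ 1) (hq₁ : 0 < q₁) (hq₁1 : q₁ ≤ 1) (hq₂ : 0 < q₂) (hq₂1 : q₂ ≤ 1)
    (U : ι → Ω → ℝ) (ξ : (v : ι) → Fin (a v) → Ω → ℝ) (η : (v : ι) → Fin (b v) → Ω → ℝ)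
    (hUm : ∀ v, Measurable (U v))
    (hξm : ∀ v i, Measurable (ξ v i))
    (hηm : ∀ v j, Measurable (η v j))
    (hU01 : ∀ v ω, U v ω = 0 ∨ U v ω = 1)
    (hξ01 : ∀ v i ω, ξ v i ω = 0 ∨ ξ v i ω = 1)
    (hη01 : ∀ v j ω, η v j ω = 0 ∨ η v j ω = 1)
    (hUp : ∀ v, μ {ω | U v ω = 1} = ENNReal.ofReal p)
    (hξq : ∀ v i, μ {ω | ξ v i ω = 1} = ENNReal.ofReal q₁)
    (hηq : ∀ v j, μ {ω | η v j ω = 1} = ENNReal.ofReal q₂)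
    (hIndep : iIndepFun
      (Sum.elim (fun v : ι => U v)
        (Sum.elim (fun vi : Σ v : ι, Fin (a v) => ξ vi.1 vi.2)
                  (fun vj : Σ v : ι, Fin (b v) => η vj.1 vj.2))) μ) :
    variance (fun ω => (1 / (p * q₁ * q₂)) *
        ∑ v, U v ω * (∑ i, ξ v i ω * w v i) * (∑ j, η v j ω)) μ
      = ((1 - q₂) / (p * q₂)) *
          (∑ v, (a v : ℝ) ^ 2 * (wMean a w v) ^ 2 * (b v : ℝ))
        + ((1 - q₁) / (p * q₁)) *
          (∑ v, (a v : ℝ) * ((wMean a w v) ^ 2 + wVar a w v) * (b v : ℝ) ^ 2)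
        + ((1 - q₁) * (1 - q₂) / (p * q₁ * q₂)) *
          (∑ v, (a v : ℝ) * ((wMean a w v) ^ 2 + wVar a w v) * (b v : ℝ))
        + ((1 - p) / p) *
          (∑ v, (a v : ℝ) ^ 2 * (wMean a w v) ^ 2 * (b v : ℝ) ^ 2) := by
  classical
  -- the underlying independent family
  set f : UBSIdx ι a b → Ω → ℝ :=
    Sum.elim (fun v : ι => U v)
      (Sum.elim (fun vi : Σ v : ι, Fin (a v) => ξ vi.1 vi.2)
                (fun vj : Σ v : ι, Fin (b v) => η vj.1 vj.2)) with hfdef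
  have hfm : ∀ k, Measurable (f k) := by
    rintro (v | ⟨v, i⟩ | ⟨v, j⟩)
    exacts [hUm v, hξm v i, hηm v j]
  -- the summands
  set X : ι → Ω → ℝ :=
    fun v ω => U v ω * (∑ i, ξ v i ω * w v i) * (∑ j, η v j ω) with hXdef
  -- measurability
  have hAm : ∀ v, Measurable (fun ω => ∑ i, ξ v i ω * w v i) :=
    fun v => Finset.univ.measurable_sum fun i _ => (hξm v i).mul_const _
  have hBm : ∀ v, Measurable (fun ω => ∑ j, η v j ω) :=
    fun v => Finset.univ.measurable_sum fun j _ => hηm v j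
  have hXm : ∀ v, Measurable (X v) := fun v => ((hUm v).mul (hAm v)).mul (hBm v)
  -- bounds
  have habsA : ∀ v ω, |∑ i, ξ v i ω * w v i| ≤ ∑ i, |w v i| := fun v ω =>
    (Finset.abs_sum_le_sum_abs _ _).trans (Finset.sum_le_sum fun i _ => by
      rw [abs_mul]
      exact mul_le_of_le_one_left (abs_nonneg _) (abs_le_one_of_01 (hξ01 v i ω)))
  have habsB : ∀ v ω, |∑ j, η v j ω| ≤ (b v : ℝ) := fun v ω =>
    (Finset.abs_sum_le_sum_abs _ _).trans <|
      (Finset.sum_le_sum fun j _ => abs_le_one_of_01 (hη01 v j ω)).trans_eq (by simp)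
  have hCA0 : ∀ v, (0:ℝ) ≤ ∑ i, |w v i| := fun v => Finset.sum_nonneg fun _ _ => abs_nonneg _
  have habsX : ∀ v ω, |X v ω| ≤ (∑ i, |w v i|) * (b v : ℝ) := by
    intro v ω
    show |U v ω * (∑ i, ξ v i ω * w v i) * (∑ j, η v j ω)| ≤ _
    rw [abs_mul, abs_mul]
    have h1 : |U v ω| * |∑ i, ξ v i ω * w v i| ≤ ∑ i, |w v i| := by
      calc |U v ω| * |∑ i, ξ v i ω * w v i| ≤ 1 * (∑ i, |w v i|) :=
            mul_le_mul (abs_le_one_of_01 (hU01 v ω)) (habsA v ω) (abs_nonneg _) zero_le_one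
        _ = ∑ i, |w v i| := one_mul _
    exact mul_le_mul h1 (habsB v ω) (abs_nonneg _) (hCA0 v)
  have hmem2 : ∀ v, MemLp (X v) 2 μ := fun v => memℒp_of_abs_le (hXm v) (habsX v) 2
  -- pairwise independence of the summands
  have hpair : ∀ v v', v ≠ v' → IndepFun (X v) (X v') μ := by
    intro v v' hvv'
    let S : ι → Finset (UBSIdx ι a b) := fun u =>
      {Sum.inl u} ∪ Finset.univ.image (fun i : Fin (a u) => Sum.inr (Sum.inl ⟨u, i⟩))
        ∪ Finset.univ.image (fun j : Fin (b u) => Sum.inr (Sum.inr ⟨u, j⟩))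
    have hkey : ∀ u x, x ∈ S u → (Sum.elim id (Sum.elim Sigma.fst Sigma.fst) x : ι) = u := by
      intro u x hx
      simp only [S, Finset.mem_union, Finset.mem_singleton, Finset.mem_image,
        Finset.mem_univ, true_and] at hx
      rcases hx with (rfl | ⟨i, rfl⟩) | ⟨j, rfl⟩ <;> rfl
    have hdisj : Disjoint (S v) (S v') := Finset.disjoint_left.2 fun x hx hx' =>
      hvv' ((hkey v x hx).symm.trans (hkey v' x hx'))
    have hmemU : ∀ u, (Sum.inl u : UBSIdx ι a b) ∈ S u := fun u => by
      simp [S]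
    have hmemξ : ∀ u (i : Fin (a u)), (Sum.inr (Sum.inl ⟨u, i⟩) : UBSIdx ι a b) ∈ S u :=
      fun u i => by
        simp only [S, Finset.mem_union, Finset.mem_image, Finset.mem_univ, true_and]
        exact Or.inl (Or.inr ⟨i, rfl⟩)
    have hmemη : ∀ u (j : Fin (b u)), (Sum.inr (Sum.inr ⟨u, j⟩) : UBSIdx ι a b) ∈ S u :=
      fun u j => by
        simp only [S, Finset.mem_union, Finset.mem_image, Finset.mem_univ, true_and]
        exact Or.inr ⟨j, rfl⟩
    have hbase := hIndep.indepFun_finset (S v) (S v') hdisj hfm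
    let Φ : (u : ι) → ((k : (S u : Finset (UBSIdx ι a b))) → ℝ) → ℝ := fun u g =>
      g ⟨Sum.inl u, hmemU u⟩ * (∑ i, g ⟨Sum.inr (Sum.inl ⟨u, i⟩), hmemξ u i⟩ * w u i)
        * (∑ j, g ⟨Sum.inr (Sum.inr ⟨u, j⟩), hmemη u j⟩)
    have hΦm : ∀ u, Measurable (Φ u) := by
      intro u
      apply Measurable.mul
      apply Measurable.mul
      · exact measurable_pi_apply _
      · exact Finset.univ.measurable_sum fun i _ => (measurable_pi_apply _).mul_const _
      · exact Finset.univ.measurable_sum fun j _ => measurable_pi_apply _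
    exact hbase.comp (hΦm v) (hΦm v')
  -- rewrite the goal
  have hgoal : (fun ω => (1 / (p * q₁ * q₂)) *
      ∑ v, U v ω * (∑ i, ξ v i ω * w v i) * (∑ j, η v j ω))
      = (1 / (p * q₁ * q₂)) • (∑ v, X v) := by
    funext ω
    rw [Pi.smul_apply, Finset.sum_apply, smul_eq_mul]
  rw [hgoal, variance_smul,
    IndepFun.variance_sum (fun v _ => hmem2 v)
      (fun v _ v' _ hvv' => hpair v v' hvv')]
  -- the per-key variance
  have key : ∀ v, variance (X v) μ
      = p * (q₁ ^ 2 * (((a v : ℝ) * wMean a w v) ^ 2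
              - (a v : ℝ) * ((wMean a w v) ^ 2 + wVar a w v))
            + q₁ * ((a v : ℝ) * ((wMean a w v) ^ 2 + wVar a w v)))
          * (q₂ ^ 2 * ((b v : ℝ) ^ 2 - (b v : ℝ)) + q₂ * (b v : ℝ))
        - (p * (q₁ * ((a v : ℝ) * wMean a w v)) * (q₂ * (b v : ℝ))) ^ 2 := by
    intro v
    -- integrability of the basic variables
    have hUint : Integrable (U v) μ :=
      integrable_of_abs_le (hUm v) (fun ω => abs_le_one_of_01 (hU01 v ω))
    have hξint : ∀ i, Integrable (ξ v i) μ := fun i =>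
      integrable_of_abs_le (hξm v i) (fun ω => abs_le_one_of_01 (hξ01 v i ω))
    have hηint : ∀ j, Integrable (η v j) μ := fun j =>
      integrable_of_abs_le (hηm v j) (fun ω => abs_le_one_of_01 (hη01 v j ω))
    have hξξabs : ∀ (i i' : Fin (a v)) ω, |ξ v i ω * ξ v i' ω| ≤ 1 := fun i i' ω => by
      rw [abs_mul]
      exact mul_le_one₀ (abs_le_one_of_01 (hξ01 v i ω)) (abs_nonneg _)
        (abs_le_one_of_01 (hξ01 v i' ω))
    have hηηabs : ∀ (j j' : Fin (b v)) ω, |η v j ω * η v j' ω| ≤ 1 := fun j j' ω => by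
      rw [abs_mul]
      exact mul_le_one₀ (abs_le_one_of_01 (hη01 v j ω)) (abs_nonneg _)
        (abs_le_one_of_01 (hη01 v j' ω))
    have hξξint : ∀ i i' : Fin (a v), Integrable (fun ω => ξ v i ω * ξ v i' ω) μ :=
      fun i i' => integrable_of_abs_le ((hξm v i).mul (hξm v i')) (hξξabs i i')
    have hηηint : ∀ j j' : Fin (b v), Integrable (fun ω => η v j ω * η v j' ω) μ :=
      fun j j' => integrable_of_abs_le ((hηm v j).mul (hηm v j')) (hηηabs j j')
    have hAint : Integrable (fun ω => ∑ i, ξ v i ω * w v i) μ :=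
      integrable_of_abs_le (hAm v) (habsA v)
    have hBint : Integrable (fun ω => ∑ j, η v j ω) μ :=
      integrable_of_abs_le (hBm v) (habsB v)
    have habsAB : ∀ ω, |(∑ i, ξ v i ω * w v i) * (∑ j, η v j ω)|
        ≤ (∑ i, |w v i|) * (b v : ℝ) := fun ω => by
      rw [abs_mul]
      exact mul_le_mul (habsA v ω) (habsB v ω) (abs_nonneg _) (hCA0 v)
    have hABint : Integrable (fun ω => (∑ i, ξ v i ω * w v i) * (∑ j, η v j ω)) μ :=
      integrable_of_abs_le ((hAm v).mul (hBm v)) habsAB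
    have hA2int : Integrable (fun ω => (∑ i, ξ v i ω * w v i) ^ 2) μ :=
      integrable_of_abs_le ((hAm v).pow_const 2) (fun ω => by
        rw [abs_pow]
        exact pow_le_pow_left₀ (abs_nonneg _) (habsA v ω) 2)
    have hB2int : Integrable (fun ω => (∑ j, η v j ω) ^ 2) μ :=
      integrable_of_abs_le ((hBm v).pow_const 2) (fun ω => by
        rw [abs_pow]
        exact pow_le_pow_left₀ (abs_nonneg _) (habsB v ω) 2)
    have hAB2int : Integrable
        (fun ω => ((∑ i, ξ v i ω * w v i) * (∑ j, η v j ω)) ^ 2) μ :=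
      integrable_of_abs_le (((hAm v).mul (hBm v)).pow_const 2) (fun ω => by
        rw [abs_pow]
        exact pow_le_pow_left₀ (abs_nonneg _) (habsAB ω) 2)
    -- basic expectations
    have hEU : ∫ ω, U v ω ∂μ = p := bernoulli_integral (hUm v) (hU01 v) hp.le (hUp v)
    have hEξ : ∀ i, ∫ ω, ξ v i ω ∂μ = q₁ := fun i =>
      bernoulli_integral (hξm v i) (hξ01 v i) hq₁.le (hξq v i)
    have hEη : ∀ j, ∫ ω, η v j ω ∂μ = q₂ := fun j =>
      bernoulli_integral (hηm v j) (hη01 v j) hq₂.le (hηq v j)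
    have hEξξ : ∀ i i' : Fin (a v),
        ∫ ω, ξ v i ω * ξ v i' ω ∂μ = if i = i' then q₁ else q₁ ^ 2 := by
      intro i i'
      by_cases h : i = i'
      · subst h
        rw [if_pos rfl]
        have he : (fun ω => ξ v i ω * ξ v i ω) = ξ v i := by
          funext ω
          rcases hξ01 v i ω with h | h <;> rw [h] <;> norm_num
        rw [he]
        exact hEξ i
      · rw [if_neg h]
        have hne : (Sum.inr (Sum.inl ⟨v, i⟩) : UBSIdx ι a b) ≠ Sum.inr (Sum.inl ⟨v, i'⟩) := by
          intro hcontr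
          apply h
          have h2 := Sum.inl.inj (Sum.inr.inj hcontr)
          exact eq_of_heq (Sigma.mk.inj_iff.mp h2).2
        have hind : IndepFun (ξ v i) (ξ v i') μ := hIndep.indepFun hne
        calc ∫ ω, ξ v i ω * ξ v i' ω ∂μ
            = (∫ ω, ξ v i ω ∂μ) * ∫ ω, ξ v i' ω ∂μ :=
              hind.integral_mul_eq_mul_integral (hξint i).aestronglyMeasurable (hξint i').aestronglyMeasurable
          _ = q₁ ^ 2 := by rw [hEξ i, hEξ i']; ring
    have hEηη : ∀ j j' : Fin (b v),
        ∫ ω, η v j ω * η v j' ω ∂μ = if j = j' then q₂ else q₂ ^ 2 := by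
      intro j j'
      by_cases h : j = j'
      · subst h
        rw [if_pos rfl]
        have he : (fun ω => η v j ω * η v j ω) = η v j := by
          funext ω
          rcases hη01 v j ω with h | h <;> rw [h] <;> norm_num
        rw [he]
        exact hEη j
      · rw [if_neg h]
        have hne : (Sum.inr (Sum.inr ⟨v, j⟩) : UBSIdx ι a b) ≠ Sum.inr (Sum.inr ⟨v, j'⟩) := by
          intro hcontr
          apply h
          have h2 := Sum.inr.inj (Sum.inr.inj hcontr)
          exact eq_of_heq (Sigma.mk.inj_iff.mp h2).2
        have hind : IndepFun (η v j) (η v j') μ := hIndep.indepFun hne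
        calc ∫ ω, η v j ω * η v j' ω ∂μ
            = (∫ ω, η v j ω ∂μ) * ∫ ω, η v j' ω ∂μ :=
              hind.integral_mul_eq_mul_integral (hηint j).aestronglyMeasurable (hηint j').aestronglyMeasurable
          _ = q₂ ^ 2 := by rw [hEη j, hEη j']; ring
    -- expectations of the sums
    have hEA : ∫ ω, (∑ i, ξ v i ω * w v i) ∂μ = q₁ * ∑ i, w v i := by
      rw [integral_finset_sum _ (fun i _ => (hξint i).mul_const (w v i)), Finset.mul_sum]
      refine Finset.sum_congr rfl fun i _ => ?_
      rw [integral_mul_const, hEξ i]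
    have hEB : ∫ ω, (∑ j, η v j ω) ∂μ = q₂ * (b v : ℝ) := by
      rw [integral_finset_sum _ (fun j _ => hηint j),
        Finset.sum_congr rfl (fun j _ => hEη j), Finset.sum_const, Finset.card_univ,
        Fintype.card_fin, nsmul_eq_mul]
      ring
    -- second moments of the sums
    have hA2exp : ∀ ω, (∑ i, ξ v i ω * w v i) ^ 2
        = ∑ i, ∑ i', (w v i * w v i') * (ξ v i ω * ξ v i' ω) := by
      intro ω
      rw [sq, Finset.sum_mul_sum]
      exact Finset.sum_congr rfl fun i _ => Finset.sum_congr rfl fun i' _ => by ring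
    have hEA2 : ∫ ω, (∑ i, ξ v i ω * w v i) ^ 2 ∂μ
        = q₁ ^ 2 * ((∑ i, w v i) ^ 2 - ∑ i, (w v i) ^ 2) + q₁ * ∑ i, (w v i) ^ 2 := by
      simp_rw [hA2exp]
      rw [integral_finset_sum _ (fun i _ =>
        integrable_finset_sum _ (fun i' _ => (hξξint i i').const_mul _))]
      have h1 : ∀ i, ∫ ω, ∑ i', (w v i * w v i') * (ξ v i ω * ξ v i' ω) ∂μ
          = ∑ i', (w v i * w v i') * (if i = i' then q₁ else q₁ ^ 2) := fun i => by
        rw [integral_finset_sum _ (fun i' _ => (hξξint i i').const_mul _)]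
        exact Finset.sum_congr rfl fun i' _ => by rw [integral_const_mul, hEξξ i i']
      rw [Finset.sum_congr rfl fun i _ => h1 i]
      have h2 : ∀ i i' : Fin (a v), (w v i * w v i') * (if i = i' then q₁ else q₁ ^ 2)
          = q₁ ^ 2 * (w v i * w v i')
            + (if i' = i then (q₁ - q₁ ^ 2) * (w v i) ^ 2 else 0) := by
        intro i i'
        by_cases h : i = i'
        · subst h; rw [if_pos rfl, if_pos rfl]; ring
        · rw [if_neg h, if_neg (Ne.symm h)]; ring
      rw [Finset.sum_congr rfl fun i _ => Finset.sum_congr rfl fun i' _ => h2 i i']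
      have h3 : ∀ i : Fin (a v),
          ∑ i', (q₁ ^ 2 * (w v i * w v i')
            + (if i' = i then (q₁ - q₁ ^ 2) * (w v i) ^ 2 else 0))
          = q₁ ^ 2 * (w v i * ∑ i', w v i') + (q₁ - q₁ ^ 2) * (w v i) ^ 2 := by
        intro i
        rw [Finset.sum_add_distrib,
          Finset.sum_ite_eq' Finset.univ i (fun _ => (q₁ - q₁ ^ 2) * (w v i) ^ 2),
          if_pos (Finset.mem_univ i)]
        congr 1
        rw [← Finset.mul_sum, ← Finset.mul_sum]
      rw [Finset.sum_congr rfl fun i _ => h3 i, Finset.sum_add_distrib,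
        ← Finset.mul_sum, ← Finset.mul_sum, ← Finset.sum_mul]
      ring
    have hB2exp : ∀ ω, (∑ j, η v j ω) ^ 2
        = ∑ j, ∑ j', η v j ω * η v j' ω := by
      intro ω
      rw [sq, Finset.sum_mul_sum]
    have hEB2 : ∫ ω, (∑ j, η v j ω) ^ 2 ∂μ
        = q₂ ^ 2 * ((b v : ℝ) ^ 2 - (b v : ℝ)) + q₂ * (b v : ℝ) := by
      simp_rw [hB2exp]
      rw [integral_finset_sum _ (fun j _ =>
        integrable_finset_sum _ (fun j' _ => hηηint j j'))]
      have h1 : ∀ j, ∫ ω, ∑ j', η v j ω * η v j' ω ∂μ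
          = ∑ j', (if j = j' then q₂ else q₂ ^ 2) := fun j => by
        rw [integral_finset_sum _ (fun j' _ => hηηint j j')]
        exact Finset.sum_congr rfl fun j' _ => hEηη j j'
      rw [Finset.sum_congr rfl fun j _ => h1 j]
      have h2 : ∀ j j' : Fin (b v), (if j = j' then q₂ else q₂ ^ 2)
          = q₂ ^ 2 + (if j' = j then q₂ - q₂ ^ 2 else 0) := by
        intro j j'
        by_cases h : j = j'
        · subst h; rw [if_pos rfl, if_pos rfl]; ring
        · rw [if_neg h, if_neg (Ne.symm h)]; ring
      rw [Finset.sum_congr rfl fun j _ => Finset.sum_congr rfl fun j' _ => h2 j j']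
      have h3 : ∀ j : Fin (b v),
          ∑ j', (q₂ ^ 2 + (if j' = j then q₂ - q₂ ^ 2 else 0))
          = (b v : ℝ) * q₂ ^ 2 + (q₂ - q₂ ^ 2) := by
        intro j
        rw [Finset.sum_add_distrib,
          Finset.sum_ite_eq' Finset.univ j (fun _ => q₂ - q₂ ^ 2),
          if_pos (Finset.mem_univ j), Finset.sum_const, Finset.card_univ, Fintype.card_fin,
          nsmul_eq_mul]
      rw [Finset.sum_congr rfl fun j _ => h3 j, Finset.sum_const, Finset.card_univ,
        Fintype.card_fin, nsmul_eq_mul]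
      ring
    -- independence of the grouped variables
    have hIndAB : IndepFun (fun ω => ∑ i, ξ v i ω * w v i) (fun ω => ∑ j, η v j ω) μ := by
      let Sξ : Finset (UBSIdx ι a b) :=
        Finset.univ.image (fun i : Fin (a v) => Sum.inr (Sum.inl ⟨v, i⟩))
      let Sη : Finset (UBSIdx ι a b) :=
        Finset.univ.image (fun j : Fin (b v) => Sum.inr (Sum.inr ⟨v, j⟩))
      have hd : Disjoint Sξ Sη := by
        rw [Finset.disjoint_left]
        intro x hx hx'
        simp only [Sξ, Sη, Finset.mem_image, Finset.mem_univ, true_and] at hx hx'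
        obtain ⟨i, rfl⟩ := hx
        obtain ⟨j, hj⟩ := hx'
        exact absurd hj (by simp)
      have hmemξ : ∀ i : Fin (a v), (Sum.inr (Sum.inl ⟨v, i⟩) : UBSIdx ι a b) ∈ Sξ :=
        fun i => Finset.mem_image_of_mem _ (Finset.mem_univ i)
      have hmemη : ∀ j : Fin (b v), (Sum.inr (Sum.inr ⟨v, j⟩) : UBSIdx ι a b) ∈ Sη :=
        fun j => Finset.mem_image_of_mem _ (Finset.mem_univ j)
      have hbase := hIndep.indepFun_finset Sξ Sη hd hfm
      let φ : (↥Sξ → ℝ) → ℝ := fun g => ∑ i, g ⟨_, hmemξ i⟩ * w v i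
      let ψ : (↥Sη → ℝ) → ℝ := fun g => ∑ j, g ⟨_, hmemη j⟩
      have hφ : Measurable φ :=
        Finset.univ.measurable_sum fun i _ => (measurable_pi_apply _).mul_const _
      have hψ : Measurable ψ :=
        Finset.univ.measurable_sum fun j _ => measurable_pi_apply _
      exact hbase.comp hφ hψ
    have hIndU_AB : IndepFun (U v)
        (fun ω => (∑ i, ξ v i ω * w v i) * (∑ j, η v j ω)) μ := by
      let SU : Finset (UBSIdx ι a b) := {Sum.inl v}
      let ST : Finset (UBSIdx ι a b) :=
        Finset.univ.image (fun i : Fin (a v) => Sum.inr (Sum.inl ⟨v, i⟩))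
          ∪ Finset.univ.image (fun j : Fin (b v) => Sum.inr (Sum.inr ⟨v, j⟩))
      have hd : Disjoint SU ST := by
        rw [Finset.disjoint_left]
        intro x hx hx'
        simp only [SU, Finset.mem_singleton] at hx
        subst hx
        simp only [ST, Finset.mem_union, Finset.mem_image, Finset.mem_univ, true_and] at hx'
        rcases hx' with ⟨i, hi⟩ | ⟨j, hj⟩
        · exact absurd hi (by simp)
        · exact absurd hj (by simp)
      have hmemU : (Sum.inl v : UBSIdx ι a b) ∈ SU := Finset.mem_singleton_self _
      have hmemξ : ∀ i : Fin (a v), (Sum.inr (Sum.inl ⟨v, i⟩) : UBSIdx ι a b) ∈ ST :=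
        fun i => Finset.mem_union_left _ (Finset.mem_image_of_mem _ (Finset.mem_univ i))
      have hmemη : ∀ j : Fin (b v), (Sum.inr (Sum.inr ⟨v, j⟩) : UBSIdx ι a b) ∈ ST :=
        fun j => Finset.mem_union_right _ (Finset.mem_image_of_mem _ (Finset.mem_univ j))
      have hbase := hIndep.indepFun_finset SU ST hd hfm
      let φ : (↥SU → ℝ) → ℝ := fun g => g ⟨_, hmemU⟩
      let ψ : (↥ST → ℝ) → ℝ := fun g =>
        (∑ i, g ⟨_, hmemξ i⟩ * w v i) * (∑ j, g ⟨_, hmemη j⟩)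
      have hφ : Measurable φ := measurable_pi_apply _
      have hψ : Measurable ψ := by
        apply Measurable.mul
        · exact Finset.univ.measurable_sum fun i _ => (measurable_pi_apply _).mul_const _
        · exact Finset.univ.measurable_sum fun j _ => measurable_pi_apply _
      exact hbase.comp hφ hψ
    have hIndU_AB2 : IndepFun (U v)
        (fun ω => ((∑ i, ξ v i ω * w v i) * (∑ j, η v j ω)) ^ 2) μ :=
      hIndU_AB.comp measurable_id (measurable_id.pow_const 2)
    have hIndA2B2 : IndepFun (fun ω => (∑ i, ξ v i ω * w v i) ^ 2)
        (fun ω => (∑ j, η v j ω) ^ 2) μ :=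
      hIndAB.comp (measurable_id.pow_const 2) (measurable_id.pow_const 2)
    -- first moment of the summand
    have hEX : ∫ ω, X v ω ∂μ = p * ((q₁ * ∑ i, w v i) * (q₂ * (b v : ℝ))) := by
      have hXe : X v = fun ω => U v ω * ((∑ i, ξ v i ω * w v i) * (∑ j, η v j ω)) := by
        funext ω
        show U v ω * _ * _ = _
        ring
      rw [hXe]
      calc ∫ ω, U v ω * ((∑ i, ξ v i ω * w v i) * (∑ j, η v j ω)) ∂μ
          = (∫ ω, U v ω ∂μ) *
              ∫ ω, (∑ i, ξ v i ω * w v i) * (∑ j, η v j ω) ∂μ :=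
            hIndU_AB.integral_mul_eq_mul_integral hUint.aestronglyMeasurable hABint.aestronglyMeasurable
        _ = p * ((∫ ω, (∑ i, ξ v i ω * w v i) ∂μ) * ∫ ω, (∑ j, η v j ω) ∂μ) := by
            rw [hEU]
            congr 1
            exact hIndAB.integral_mul_eq_mul_integral hAint.aestronglyMeasurable hBint.aestronglyMeasurable
        _ = p * ((q₁ * ∑ i, w v i) * (q₂ * (b v : ℝ))) := by rw [hEA, hEB]
    -- second moment of the summand
    have hEX2 : ∫ ω, (X v ω) ^ 2 ∂μ
        = p * ((q₁ ^ 2 * ((∑ i, w v i) ^ 2 - ∑ i, (w v i) ^ 2) + q₁ * ∑ i, (w v i) ^ 2)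
            * (q₂ ^ 2 * ((b v : ℝ) ^ 2 - (b v : ℝ)) + q₂ * (b v : ℝ))) := by
      have hXsq : (fun ω => (X v ω) ^ 2)
          = fun ω => U v ω * ((∑ i, ξ v i ω * w v i) * (∑ j, η v j ω)) ^ 2 := by
        funext ω
        show (U v ω * _ * _) ^ 2 = _
        rcases hU01 v ω with h | h <;> rw [h] <;> ring
      rw [hXsq]
      calc ∫ ω, U v ω * ((∑ i, ξ v i ω * w v i) * (∑ j, η v j ω)) ^ 2 ∂μ
          = (∫ ω, U v ω ∂μ) *
              ∫ ω, ((∑ i, ξ v i ω * w v i) * (∑ j, η v j ω)) ^ 2 ∂μ :=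
            hIndU_AB2.integral_mul_eq_mul_integral hUint.aestronglyMeasurable hAB2int.aestronglyMeasurable
        _ = (∫ ω, U v ω ∂μ) *
              ∫ ω, (∑ i, ξ v i ω * w v i) ^ 2 * (∑ j, η v j ω) ^ 2 ∂μ := by
            simp_rw [mul_pow]
        _ = p * ((q₁ ^ 2 * ((∑ i, w v i) ^ 2 - ∑ i, (w v i) ^ 2) + q₁ * ∑ i, (w v i) ^ 2)
            * (q₂ ^ 2 * ((b v : ℝ) ^ 2 - (b v : ℝ)) + q₂ * (b v : ℝ))) := by
            rw [hEU]
            have hsplit : ∫ ω, (∑ i, ξ v i ω * w v i) ^ 2 * (∑ j, η v j ω) ^ 2 ∂μ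
                = (∫ ω, (∑ i, ξ v i ω * w v i) ^ 2 ∂μ) * ∫ ω, (∑ j, η v j ω) ^ 2 ∂μ :=
              hIndA2B2.integral_mul_eq_mul_integral hA2int.aestronglyMeasurable hB2int.aestronglyMeasurable
            rw [hsplit, hEA2, hEB2]
    -- assemble the variance
    rw [variance_eq_sub (hmem2 v)]
    have e2 : (μ[(X v) ^ 2] : ℝ) = ∫ ω, (X v ω) ^ 2 ∂μ := rfl
    have e1 : (μ[X v] : ℝ) = ∫ ω, X v ω ∂μ := rfl
    rw [e2, e1, hEX2, hEX, card_mul_wMean a w v, card_mul_meanSq a w v]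
    ring
  rw [Finset.sum_congr rfl fun v _ => key v]
  -- final algebra
  rw [Finset.mul_sum, Finset.mul_sum, Finset.mul_sum, Finset.mul_sum, Finset.mul_sum,
    ← Finset.sum_add_distrib, ← Finset.sum_add_distrib, ← Finset.sum_add_distrib]
  refine Finset.sum_congr rfl fun v _ => ?_
  field_simp
  ring
end

section
/- (Lemma: equal universe rates are optimal for SUM.) Fix p₁ ∈ (0,1], q₁ ∈ (0,1], and an effective sampling rate ε₂ ∈ (0,1] with ε₂ ≤ p₁. Then for every p₂ with ε₂ ≤ p₂ ≤ 1 (and corresponding uniform rate q₂ = ε₂/p₂), W_sum(p₁, q₁, p₂, ε₂/p₂) ≥ W_sum(p₁, q₁, p₁, ε₂/p₁); that is, the sum-estimator variance is minimized over p₂ ∈ [ε₂, 1] at p₂ = p₁. -/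
/-- `β₁ = ∑ a_v² μ_v² b_v`. -/
noncomputable def beta1 {ι : Type*} [Fintype ι] (a b : ι → ℕ) (w : (v : ι) → Fin (a v) → ℝ) : ℝ :=
  ∑ v, (a v : ℝ) ^ 2 * (wMean a w v) ^ 2 * (b v : ℝ)

/-- `β₂ = ∑ a_v (μ_v² + σ_v²) b_v²`. -/
noncomputable def beta2 {ι : Type*} [Fintype ι] (a b : ι → ℕ) (w : (v : ι) → Fin (a v) → ℝ) : ℝ :=
  ∑ v, (a v : ℝ) * ((wMean a w v) ^ 2 + wVar a w v) * (b v : ℝ) ^ 2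

/-- `β₃ = ∑ a_v (μ_v² + σ_v²) b_v`. -/
noncomputable def beta3 {ι : Type*} [Fintype ι] (a b : ι → ℕ) (w : (v : ι) → Fin (a v) → ℝ) : ℝ :=
  ∑ v, (a v : ℝ) * ((wMean a w v) ^ 2 + wVar a w v) * (b v : ℝ)

/-- `β₄ = ∑ a_v² μ_v² b_v²`. -/
noncomputable def beta4 {ι : Type*} [Fintype ι] (a b : ι → ℕ) (w : (v : ι) → Fin (a v) → ℝ) : ℝ :=
  ∑ v, (a v : ℝ) ^ 2 * (wMean a w v) ^ 2 * (b v : ℝ) ^ 2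

/-- Variance of the UBS sum estimator when the two tables are sampled with parameters
`(p₁, q₁)` and `(p₂, q₂)` sharing the same hash; `m = min p₁ p₂`. -/
noncomputable def Wsum {ι : Type*} [Fintype ι] (a b : ι → ℕ) (w : (v : ι) → Fin (a v) → ℝ)
    (p₁ q₁ p₂ q₂ : ℝ) : ℝ :=
  ((1 - q₂) / (min p₁ p₂ * q₂)) * beta1 a b w
    + ((1 - q₁) / (min p₁ p₂ * q₁)) * beta2 a b w
    + ((1 - q₁) * (1 - q₂) / (min p₁ p₂ * q₁ * q₂)) * beta3 a b w
    + ((1 - min p₁ p₂) / min p₁ p₂) * beta4 a b w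

/-- **Equal universe rates are optimal for SUM.**  Fixing `(p₁, q₁)` for the first table and
the effective rate `ε₂ ≤ p₁` for the second, the sum-estimator variance over `p₂ ∈ [ε₂, 1]`
(with uniform rate `q₂ = ε₂ / p₂`) is minimized at `p₂ = p₁`. -/
theorem equal_universe_rate_optimal_for_sum
    {ι : Type*} [Fintype ι] (a b : ι → ℕ) (w : (v : ι) → Fin (a v) → ℝ)
    (p₁ q₁ ε₂ : ℝ) (hp₁0 : 0 < p₁) (hp₁1 : p₁ ≤ 1) (hq₁0 : 0 < q₁) (hq₁1 : q₁ ≤ 1)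
    (hε₂0 : 0 < ε₂) (hε₂1 : ε₂ ≤ 1) (hle : ε₂ ≤ p₁) :
    ∀ p₂, ε₂ ≤ p₂ → p₂ ≤ 1 →
      Wsum a b w p₁ q₁ p₁ (ε₂ / p₁) ≤ Wsum a b w p₁ q₁ p₂ (ε₂ / p₂) := by
  have hterm : ∀ v, (0:ℝ) ≤ (wMean a w v) ^ 2 + wVar a w v := by
    intro v
    have : (0:ℝ) ≤ wVar a w v := by
      unfold wVar; positivity
    positivity
  have hβ1 : 0 ≤ beta1 a b w := by
    unfold beta1; apply Finset.sum_nonneg; intro v _; positivity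
  have hβ3 : 0 ≤ beta3 a b w := by
    unfold beta3; apply Finset.sum_nonneg; intro v _
    have := hterm v; positivity
  have hb : ∀ v : ι, (b v : ℝ) ≤ (b v : ℝ) ^ 2 := by
    intro v
    have : b v ≤ (b v) ^ 2 := Nat.le_self_pow (by norm_num) _
    exact_mod_cast this
  have h14 : beta1 a b w ≤ beta4 a b w := by
    unfold beta1 beta4
    apply Finset.sum_le_sum; intro v _
    have := hb v
    nlinarith [sq_nonneg ((a v : ℝ) * wMean a w v)]
  have h32 : beta3 a b w ≤ beta2 a b w := by
    unfold beta2 beta3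
    apply Finset.sum_le_sum; intro v _
    have h1 := hb v
    have h2 := hterm v
    exact mul_le_mul_of_nonneg_left h1 (by positivity)
  intro p₂ h1 h2
  have hp₂0 : 0 < p₂ := lt_of_lt_of_le hε₂0 h1
  rw [← sub_nonneg]
  rcases le_total p₂ p₁ with h | h
  · have key : Wsum a b w p₁ q₁ p₂ (ε₂ / p₂) - Wsum a b w p₁ q₁ p₁ (ε₂ / p₁)
        = (1/p₂ - 1/p₁) * (beta4 a b w - beta1 a b w)
          + ((1 - q₁)/q₁) * (1/p₂ - 1/p₁) * (beta2 a b w - beta3 a b w) := by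
      unfold Wsum
      rw [min_self, min_eq_right h]
      field_simp
      ring
    rw [key]
    have hδ : 0 ≤ 1/p₂ - 1/p₁ := by
      rw [sub_nonneg]
      exact one_div_le_one_div_of_le hp₂0 h
    have hq : 0 ≤ (1 - q₁)/q₁ := div_nonneg (by linarith) hq₁0.le
    exact add_nonneg (mul_nonneg hδ (sub_nonneg.mpr h14))
      (mul_nonneg (mul_nonneg hq hδ) (sub_nonneg.mpr h32))
  · have key : Wsum a b w p₁ q₁ p₂ (ε₂ / p₂) - Wsum a b w p₁ q₁ p₁ (ε₂ / p₁)
        = (p₂ - p₁)/(p₁ * ε₂) * beta1 a b w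
          + ((1 - q₁)/q₁) * ((p₂ - p₁)/(p₁ * ε₂)) * beta3 a b w := by
      unfold Wsum
      rw [min_self, min_eq_left h]
      field_simp
      ring
    rw [key]
    have hδ : 0 ≤ (p₂ - p₁)/(p₁ * ε₂) := by
      apply div_nonneg (by linarith) (by positivity)
    have hq : 0 ≤ (1 - q₁)/q₁ := div_nonneg (by linarith) hq₁0.le
    exact add_nonneg (mul_nonneg hδ hβ1) (mul_nonneg (mul_nonneg hq hδ) hβ3)
end

section
/- (Theorem: optimal centralized UBS parameters for SUM.) Assume β₃ > 0. Let p* = min{ 1, max{ ε₁, ε₂, √( ε₁ε₂·(β₄ + β₃ − β₁ − β₂) / β₃ ) } }, where √x denotes the real square root (equal to 0 when its argument is negative). Then p* ∈ [max(ε₁,ε₂), 1] and for every p with max(ε₁, ε₂) ≤ p ≤ 1, V_sum(p*) ≤ V_sum(p); i.e., p* minimizes the sum-estimator variance over all admissible universe sampling rates. -/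
/-- Variance of the UBS sum estimator in the centralized setting as a function of the
common universe sampling rate `p` (uniform rates `ε₁ / p` and `ε₂ / p`). -/
noncomputable def Vsum {ι : Type*} [Fintype ι] (a b : ι → ℕ) (w : (v : ι) → Fin (a v) → ℝ)
    (ε₁ ε₂ p : ℝ) : ℝ :=
  (1 / ε₂ - 1 / p) * beta1 a b w
    + (1 / ε₁ - 1 / p) * beta2 a b w
    + (p / (ε₁ * ε₂) - 1 / ε₁ - 1 / ε₂ + 1 / p) * beta3 a b w
    + (1 / p - 1) * beta4 a b w

private lemma Vsum_sub {ι : Type*} [Fintype ι] (a b : ι → ℕ) (w : (v : ι) → Fin (a v) → ℝ)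
    {ε₁ ε₂ p q : ℝ} (hε₁ : ε₁ ≠ 0) (hε₂ : ε₂ ≠ 0) (hp : p ≠ 0) (hq : q ≠ 0) :
    Vsum a b w ε₁ ε₂ q - Vsum a b w ε₁ ε₂ p
      = ((q - p) * (beta3 a b w * (q * p)
          - ε₁ * ε₂ * (beta4 a b w + beta3 a b w - beta1 a b w - beta2 a b w)))
        / (ε₁ * ε₂ * (p * q)) := by
  unfold Vsum
  field_simp
  ring

/-- **Optimal centralized UBS parameter for SUM.**  Assuming `β₃ > 0`, the rate
`p* = min {1, max {ε₁, ε₂, √(ε₁ε₂ (β₄ + β₃ − β₁ − β₂) / β₃)}}` (real square root, `0` on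
negative arguments) lies in `[max ε₁ ε₂, 1]` and minimizes the sum-estimator variance over
all admissible universe sampling rates. -/
theorem optimal_centralized_sum_rate
    {ι : Type*} [Fintype ι] (a b : ι → ℕ) (w : (v : ι) → Fin (a v) → ℝ)
    (ε₁ ε₂ : ℝ) (hε₁0 : 0 < ε₁) (hε₁1 : ε₁ ≤ 1) (hε₂0 : 0 < ε₂) (hε₂1 : ε₂ ≤ 1)
    (hβ₃ : 0 < beta3 a b w)
    (pstar : ℝ)
    (hpstar : pstar = min 1 (max ε₁ (max ε₂
      (Real.sqrt (ε₁ * ε₂ * (beta4 a b w + beta3 a b w - beta1 a b w - beta2 a b w)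
        / beta3 a b w))))) :
    pstar ∈ Set.Icc (max ε₁ ε₂) 1 ∧
      ∀ p ∈ Set.Icc (max ε₁ ε₂) 1, Vsum a b w ε₁ ε₂ pstar ≤ Vsum a b w ε₁ ε₂ p := by
  set B := beta4 a b w + beta3 a b w - beta1 a b w - beta2 a b w with hBdef
  set s := Real.sqrt (ε₁ * ε₂ * B / beta3 a b w) with hsdef
  have hs0 : 0 ≤ s := Real.sqrt_nonneg _
  have hlo0 : 0 < max ε₁ ε₂ := lt_max_of_lt_left hε₁0
  have hlo1 : max ε₁ ε₂ ≤ 1 := max_le hε₁1 hε₂1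
  have hps : pstar = min 1 (max (max ε₁ ε₂) s) := by rw [hpstar, max_assoc]
  have hmem : pstar ∈ Set.Icc (max ε₁ ε₂) 1 := by
    rw [hps]
    exact ⟨le_min hlo1 (le_max_left _ _), min_le_left _ _⟩
  refine ⟨hmem, ?_⟩
  have hps0 : 0 < pstar := lt_of_lt_of_le hlo0 hmem.1
  have hge : ε₁ * ε₂ * B ≤ beta3 a b w * s ^ 2 := by
    rcases le_or_gt B 0 with hB | hB
    · nlinarith [mul_nonneg (mul_pos hε₁0 hε₂0).le (neg_nonneg.2 hB),
        mul_nonneg hβ₃.le (sq_nonneg s)]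
    · have harg : 0 ≤ ε₁ * ε₂ * B / beta3 a b w := by positivity
      rw [hsdef, Real.sq_sqrt harg, mul_div_cancel₀ _ hβ₃.ne']
  have heq : 0 < s → beta3 a b w * s ^ 2 = ε₁ * ε₂ * B := by
    intro h
    rw [hsdef] at h
    have harg := (Real.sqrt_pos.mp h).le
    rw [hsdef, Real.sq_sqrt harg, mul_div_cancel₀ _ hβ₃.ne']
  intro p hp
  have hp0 : 0 < p := lt_of_lt_of_le hlo0 hp.1
  rw [← sub_nonpos, Vsum_sub a b w hε₁0.ne' hε₂0.ne' hp0.ne' hps0.ne', ← hBdef]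
  apply div_nonpos_of_nonpos_of_nonneg _ (by positivity)
  rcases le_total pstar p with hcase | hcase
  · rcases le_or_gt (max (max ε₁ ε₂) s) 1 with h1 | h1
    · have hpe : pstar = max (max ε₁ ε₂) s := by rw [hps, min_eq_right h1]
      have hsle : s ≤ pstar := hpe ▸ le_max_right _ _
      have h2 : s ^ 2 ≤ pstar * p := by nlinarith
      have hX : 0 ≤ beta3 a b w * (pstar * p) - ε₁ * ε₂ * B := by
        nlinarith [mul_le_mul_of_nonneg_left h2 hβ₃.le]
      nlinarith [mul_nonneg (sub_nonneg.2 hcase) hX]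
    · have hpe : pstar = 1 := by rw [hps, min_eq_left h1.le]
      have hpp : pstar = p := by rw [hpe]; linarith [hp.2, hpe ▸ hcase]
      rw [← hpp, sub_self, zero_mul]
  · rcases le_or_gt s (max ε₁ ε₂) with h1 | h1
    · have hpe : pstar = max ε₁ ε₂ := by
        rw [hps, max_eq_left h1, min_eq_right hlo1]
      have hpp : pstar = p := le_antisymm (hpe ▸ hp.1) hcase
      rw [← hpp, sub_self, zero_mul]
    · have hsp : 0 < s := lt_trans hlo0 h1
      have he := heq hsp
      have hple : pstar ≤ s := by
        rw [hps, max_eq_right h1.le]; exact min_le_right _ _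
      have h2 : pstar * p ≤ s ^ 2 := by nlinarith
      have hX : beta3 a b w * (pstar * p) - ε₁ * ε₂ * B ≤ 0 := by
        nlinarith [mul_le_mul_of_nonneg_left h2 hβ₃.le]
      nlinarith [mul_nonneg (sub_nonneg.2 hcase) (neg_nonneg.2 hX)]
end

section
/- (Corollary: near-optimality of the two-point rule for decentralized SUM.) With h' and h* as above, suppose p' ∈ [max(ε₁,ε₂), 1] minimizes h' over [max(ε₁,ε₂), 1] and p* ∈ [max(ε₁,ε₂), 1] minimizes h* over [max(ε₁,ε₂), 1]. Then h*(p') ≤ 2·h*(p*); i.e., choosing the universe rate that minimizes the two-point approximation increases the optimal worst-case variance by at most a factor of 2. -/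
/-- `h_v(p)`: the sum-estimator variance when all of the second table's mass `n_b` is
concentrated on the join key `v`. -/
noncomputable def hKey {ι : Type*} (a : ι → ℕ) (w : (v : ι) → Fin (a v) → ℝ)
    (nb ε₁ ε₂ : ℝ) (v : ι) (p : ℝ) : ℝ :=
  (1 / ε₂ - 1 / p) * (a v : ℝ) ^ 2 * (wMean a w v) ^ 2 * nb
    + (1 / ε₁ - 1 / p) * (a v : ℝ) * ((wMean a w v) ^ 2 + wVar a w v) * nb ^ 2
    + (p / (ε₁ * ε₂) - 1 / ε₁ - 1 / ε₂ + 1 / p) *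
        (a v : ℝ) * ((wMean a w v) ^ 2 + wVar a w v) * nb
    + (1 / p - 1) * (a v : ℝ) ^ 2 * (wMean a w v) ^ 2 * nb ^ 2

/-- **Near-optimality of the two-point rule for decentralized SUM.**  If `p'` minimizes the
two-point envelope `h'(p) = max {h_{v₁}(p), h_{v₂}(p)}` over `[max ε₁ ε₂, 1]` and `p*`
minimizes the worst case `h*(p) = max_v h_v(p)` there, then `h*(p') ≤ 2 h*(p*)`. -/
theorem two_point_rule_near_optimal_for_sum
    {ι : Type*} [Fintype ι] [Nonempty ι] (a : ι → ℕ) (w : (v : ι) → Fin (a v) → ℝ)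
    (nb : ℝ) (hnb : 0 < nb)
    (ε₁ ε₂ : ℝ) (hε₁0 : 0 < ε₁) (hε₁1 : ε₁ ≤ 1) (hε₂0 : 0 < ε₂) (hε₂1 : ε₂ ≤ 1)
    (v₁ v₂ : ι)
    (hv₁ : ∀ v, (a v : ℝ) ^ 2 * (wMean a w v) ^ 2 ≤ (a v₁ : ℝ) ^ 2 * (wMean a w v₁) ^ 2)
    (hv₂ : ∀ v, (a v : ℝ) * ((wMean a w v) ^ 2 + wVar a w v)
      ≤ (a v₂ : ℝ) * ((wMean a w v₂) ^ 2 + wVar a w v₂))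
    (p' pstar : ℝ)
    (hp' : p' ∈ Set.Icc (max ε₁ ε₂) 1) (hpstar : pstar ∈ Set.Icc (max ε₁ ε₂) 1)
    (hp'min : ∀ p ∈ Set.Icc (max ε₁ ε₂) 1,
      max (hKey a w nb ε₁ ε₂ v₁ p') (hKey a w nb ε₁ ε₂ v₂ p')
        ≤ max (hKey a w nb ε₁ ε₂ v₁ p) (hKey a w nb ε₁ ε₂ v₂ p))
    (hpstarmin : ∀ p ∈ Set.Icc (max ε₁ ε₂) 1,
      Finset.univ.sup' Finset.univ_nonempty (fun v => hKey a w nb ε₁ ε₂ v pstar)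
        ≤ Finset.univ.sup' Finset.univ_nonempty (fun v => hKey a w nb ε₁ ε₂ v p)) :
    Finset.univ.sup' Finset.univ_nonempty (fun v => hKey a w nb ε₁ ε₂ v p')
      ≤ 2 * Finset.univ.sup' Finset.univ_nonempty (fun v => hKey a w nb ε₁ ε₂ v pstar) := by
  have hA : ∀ v : ι, 0 ≤ (a v : ℝ) ^ 2 * (wMean a w v) ^ 2 := fun v => by positivity
  have hB : ∀ v : ι, 0 ≤ (a v : ℝ) * ((wMean a w v) ^ 2 + wVar a w v) := by
    intro v
    have hσ : 0 ≤ wVar a w v :=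
      div_nonneg (Finset.sum_nonneg fun i _ => sq_nonneg _) (Nat.cast_nonneg _)
    have := sq_nonneg (wMean a w v)
    have : (0:ℝ) ≤ (a v : ℝ) := Nat.cast_nonneg _
    nlinarith [sq_nonneg (wMean a w v)]
  -- pointwise bound: for p in the interval, every h_v(p) ≤ h_{v₁}(p) + h_{v₂}(p)
  have hkey_le : ∀ p ∈ Set.Icc (max ε₁ ε₂) 1, ∀ v : ι,
      hKey a w nb ε₁ ε₂ v p ≤ hKey a w nb ε₁ ε₂ v₁ p + hKey a w nb ε₁ ε₂ v₂ p := by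
    intro p hp v
    obtain ⟨hpl, hpu⟩ := hp
    have hp1 : ε₁ ≤ p := le_trans (le_max_left _ _) hpl
    have hp2 : ε₂ ≤ p := le_trans (le_max_right _ _) hpl
    have hp0 : 0 < p := lt_of_lt_of_le hε₁0 hp1
    set c₁ : ℝ := (1 / ε₂ - 1 / p) * nb + (1 / p - 1) * nb ^ 2 with hc₁def
    set c₂ : ℝ := (1 / ε₁ - 1 / p) * nb ^ 2
        + (p / (ε₁ * ε₂) - 1 / ε₁ - 1 / ε₂ + 1 / p) * nb with hc₂def
    have h1 : 1 / p ≤ 1 / ε₂ := one_div_le_one_div_of_le hε₂0 hp2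
    have h1' : 1 / p ≤ 1 / ε₁ := one_div_le_one_div_of_le hε₁0 hp1
    have h2 : 1 ≤ 1 / p := one_le_one_div hp0 hpu
    have hc₁ : 0 ≤ c₁ := by
      have : 0 ≤ (1 / ε₂ - 1 / p) * nb := mul_nonneg (by linarith) hnb.le
      have : 0 ≤ (1 / p - 1) * nb ^ 2 := mul_nonneg (by linarith) (by positivity)
      rw [hc₁def]; nlinarith
    have hq : p / (ε₁ * ε₂) - 1 / ε₁ - 1 / ε₂ + 1 / p
        = (p - ε₁) * (p - ε₂) / (p * ε₁ * ε₂) := by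
      field_simp
      ring
    have hc₂ : 0 ≤ c₂ := by
      have hq0 : 0 ≤ p / (ε₁ * ε₂) - 1 / ε₁ - 1 / ε₂ + 1 / p := by
        rw [hq]
        apply div_nonneg (mul_nonneg (by linarith) (by linarith))
        positivity
      have : 0 ≤ (1 / ε₁ - 1 / p) * nb ^ 2 := mul_nonneg (by linarith) (by positivity)
      rw [hc₂def]; nlinarith [mul_nonneg hq0 hnb.le]
    have hrw : ∀ u : ι, hKey a w nb ε₁ ε₂ u p
        = c₁ * ((a u : ℝ) ^ 2 * (wMean a w u) ^ 2)
          + c₂ * ((a u : ℝ) * ((wMean a w u) ^ 2 + wVar a w u)) := by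
      intro u
      rw [hKey, hc₁def, hc₂def]; ring
    rw [hrw v, hrw v₁, hrw v₂]
    have t1 : c₁ * ((a v : ℝ) ^ 2 * (wMean a w v) ^ 2)
        ≤ c₁ * ((a v₁ : ℝ) ^ 2 * (wMean a w v₁) ^ 2) :=
      mul_le_mul_of_nonneg_left (hv₁ v) hc₁
    have t2 : c₂ * ((a v : ℝ) * ((wMean a w v) ^ 2 + wVar a w v))
        ≤ c₂ * ((a v₂ : ℝ) * ((wMean a w v₂) ^ 2 + wVar a w v₂)) :=
      mul_le_mul_of_nonneg_left (hv₂ v) hc₂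
    have t3 : 0 ≤ c₂ * ((a v₁ : ℝ) * ((wMean a w v₁) ^ 2 + wVar a w v₁)) :=
      mul_nonneg hc₂ (hB v₁)
    have t4 : 0 ≤ c₁ * ((a v₂ : ℝ) ^ 2 * (wMean a w v₂) ^ 2) :=
      mul_nonneg hc₁ (hA v₂)
    linarith
  have main : ∀ p ∈ Set.Icc (max ε₁ ε₂) 1,
      Finset.univ.sup' Finset.univ_nonempty (fun v => hKey a w nb ε₁ ε₂ v p)
        ≤ 2 * max (hKey a w nb ε₁ ε₂ v₁ p) (hKey a w nb ε₁ ε₂ v₂ p) := by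
    intro p hp
    apply Finset.sup'_le
    intro v _
    have := hkey_le p hp v
    have h₁ := le_max_left (hKey a w nb ε₁ ε₂ v₁ p) (hKey a w nb ε₁ ε₂ v₂ p)
    have h₂ := le_max_right (hKey a w nb ε₁ ε₂ v₁ p) (hKey a w nb ε₁ ε₂ v₂ p)
    linarith
  have hmaxle : ∀ p : ℝ, max (hKey a w nb ε₁ ε₂ v₁ p) (hKey a w nb ε₁ ε₂ v₂ p)
      ≤ Finset.univ.sup' Finset.univ_nonempty (fun v => hKey a w nb ε₁ ε₂ v p) := by
    intro p
    exact max_le (Finset.le_sup' (fun v => hKey a w nb ε₁ ε₂ v p) (Finset.mem_univ v₁)) (Finset.le_sup' (fun v => hKey a w nb ε₁ ε₂ v p) (Finset.mem_univ v₂))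
  have h1 := main p' hp'
  have h2 := hp'min pstar hpstar
  have h3 := hmaxle pstar
  linarith
end
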